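/- arXiv:2103.11347 — 8 statements merged into one kernel-verified Lean document; each statement's English description precedes it below -/
import Mathlib

section
/- Let 0 < c < 1 and consider the elliptical billiard table 𝒯 with boundary C = {(x,y) ∈ ℝ² : x² + y²/(1−c²) = 1} and foci F₁ = (−c,0), F₂ = (c,0). Let p₁, p₂ ∈ 𝒯 and assume it is not the case that both p₁ and p₂ belong to {F₁, F₂}. Then for every integer n ≥ 1 there exists a billiard trajectory from p₁ to p₂ with exactly n bounces; that is, there exist points x₁, …, x_n ∈ C with x₁ ≠ p₁, x_n ≠ p₂ and x_{j+1} ≠ x_j for 1 ≤ j ≤ n−1, such that, setting u₀ = (x₁ − p₁)/‖x₁ − p₁‖, u_j = (x_{j+1} − x_j)/‖x_{j+1} − x_j‖ for 1 ≤ j ≤ n−1, and u_n = (p₂ − x_n)/‖p₂ − x_n‖, the reflection law u_j = u_{j−1} − 2⟨u_{j−1}, ν(x_j)⟩·ν(x_j) holds for every 1 ≤ j ≤ n. -/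
noncomputable section

/-- The Euclidean inner product on `ℝ × ℝ`. -/
def ip (v w : ℝ × ℝ) : ℝ := v.1 * w.1 + v.2 * w.2

/-- The Euclidean norm on `ℝ × ℝ`. -/
def nrm (v : ℝ × ℝ) : ℝ := Real.sqrt (ip v v)

/-- The boundary ellipse `C = {(x,y) : x² + y²/(1−c²) = 1}`. -/
def ellipseC (c : ℝ) : Set (ℝ × ℝ) := {q | q.1 ^ 2 + q.2 ^ 2 / (1 - c ^ 2) = 1}

/-- The closed billiard table `𝒯`. -/
def tableT (c : ℝ) : Set (ℝ × ℝ) := {q | q.1 ^ 2 + q.2 ^ 2 / (1 - c ^ 2) ≤ 1}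

/-- The outward unit normal to `C` at `q`: the unit vector in the direction of
`(q₁, q₂/(1−c²))`. -/
def nuC (c : ℝ) (q : ℝ × ℝ) : ℝ × ℝ :=
  (nrm (q.1, q.2 / (1 - c ^ 2)))⁻¹ • (q.1, q.2 / (1 - c ^ 2))

/-- `p` is one of the two foci `(±c, 0)` of the ellipse. -/
def IsFocus (c : ℝ) (p : ℝ × ℝ) : Prop := p = (c, 0) ∨ p = (-c, 0)

lemma ip_self_nonneg (v : ℝ × ℝ) : 0 ≤ ip v v := by
  have := mul_self_nonneg v.1; have := mul_self_nonneg v.2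
  simp only [ip]; linarith

lemma ip_self_pos {v : ℝ × ℝ} (h : v ≠ 0) : 0 < ip v v := by
  have hv : v.1 ≠ 0 ∨ v.2 ≠ 0 := by
    by_contra h'; push_neg at h'; exact h (Prod.ext h'.1 h'.2)
  have h1 := mul_self_nonneg v.1; have h2 := mul_self_nonneg v.2
  simp only [ip]
  rcases hv with hv | hv
  · nlinarith [mul_self_pos.mpr hv]
  · nlinarith [mul_self_pos.mpr hv]

lemma nrm_nonneg (v : ℝ × ℝ) : 0 ≤ nrm v := Real.sqrt_nonneg _

lemma nrm_mul_self (v : ℝ × ℝ) : nrm v * nrm v = ip v v :=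
  Real.mul_self_sqrt (ip_self_nonneg v)

lemma nrm_pos {v : ℝ × ℝ} (h : v ≠ 0) : 0 < nrm v :=
  Real.sqrt_pos.mpr (ip_self_pos h)

lemma nrm_ne_zero {v : ℝ × ℝ} (h : v ≠ 0) : nrm v ≠ 0 := (nrm_pos h).ne'

lemma eq_zero_of_ip_self {v : ℝ × ℝ} (h : ip v v = 0) : v = 0 := by
  by_contra hv; exact (ip_self_pos hv).ne' h

lemma ip_sq_le (v w : ℝ × ℝ) : ip v w ^ 2 ≤ ip v v * ip w w := by
  simp only [ip]; nlinarith [sq_nonneg (v.1 * w.2 - v.2 * w.1)]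

lemma ip_le_nrm_mul (v w : ℝ × ℝ) : ip v w ≤ nrm v * nrm w := by
  have h1 : nrm v * nrm w = Real.sqrt (ip v v * ip w w) := by
    rw [nrm, nrm, ← Real.sqrt_mul (ip_self_nonneg v)]
  calc ip v w ≤ |ip v w| := le_abs_self _
    _ = Real.sqrt (ip v w ^ 2) := (Real.sqrt_sq_eq_abs _).symm
    _ ≤ Real.sqrt (ip v v * ip w w) := Real.sqrt_le_sqrt (ip_sq_le v w)
    _ = nrm v * nrm w := h1.symm

lemma nrm_triangle (v w : ℝ × ℝ) : nrm (v + w) ≤ nrm v + nrm w := by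
  have hs : 0 ≤ nrm v + nrm w := by linarith [nrm_nonneg v, nrm_nonneg w]
  have hX : ip (v + w) (v + w) ≤ (nrm v + nrm w) ^ 2 := by
    have h1 := ip_le_nrm_mul v w
    have h2 := nrm_mul_self v; have h3 := nrm_mul_self w
    simp only [ip, Prod.fst_add, Prod.snd_add] at *
    nlinarith
  calc nrm (v + w) = Real.sqrt (ip (v + w) (v + w)) := rfl
    _ ≤ Real.sqrt ((nrm v + nrm w) ^ 2) := Real.sqrt_le_sqrt hX
    _ = nrm v + nrm w := by rw [Real.sqrt_sq hs]

lemma table_ineq {d x y : ℝ} (hd : 0 < d) (h : x + y / d ≤ 1) : x * d + y ≤ d := by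
  have h2 := mul_le_mul_of_nonneg_right h hd.le
  rw [add_mul, div_mul_cancel₀ _ hd.ne'] at h2; linarith

lemma table_eq {d x y : ℝ} (hd : 0 < d) (h : x + y / d = 1) : x * d + y = d := by
  have h2 := congrArg (· * d) h
  simp only [add_mul, div_mul_cancel₀ _ hd.ne', one_mul] at h2; linarith

lemma aux_ge {d X Y B2 : ℝ} (hd : 0 < d) (hX : X ≤ d) (hYpos : 0 ≤ Y)
    (hCS : B2 ≤ X * Y) (hd2 : d ^ 2 ≤ B2) : d ≤ Y := by
  nlinarith [mul_nonneg (sub_nonneg.2 hX) hYpos]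

lemma aux_le {d B : ℝ} (hd : 0 < d) (hB : d ≤ B) (h2 : B ^ 2 ≤ d ^ 2) : B = d :=
  le_antisymm (by nlinarith) hB

set_option maxHeartbeats 800000 in
lemma quad_sc {d t a1 a2 b1 b2 : ℝ} (hd : 0 < d)
    (hQa : a1 ^ 2 * d + a2 ^ 2 ≤ d) (hQb : b1 ^ 2 * d + b2 ^ 2 ≤ d)
    (hQy : (t * a1 + (1 - t) * b1) ^ 2 * d + (t * a2 + (1 - t) * b2) ^ 2 = d)
    (ht0 : 0 < t) (ht1 : t < 1) : a1 = b1 ∧ a2 = b2 := by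
  have ht1' : 0 < 1 - t := by linarith
  have key1 : t ^ 2 * (a1 ^ 2 * d + a2 ^ 2)
      + 2 * t * (1 - t) * (a1 * b1 * d + a2 * b2)
      + (1 - t) ^ 2 * (b1 ^ 2 * d + b2 ^ 2) = d := by linear_combination hQy
  have s1 : t ^ 2 * (a1 ^ 2 * d + a2 ^ 2) ≤ t ^ 2 * d :=
    mul_le_mul_of_nonneg_left hQa (sq_nonneg t)
  have s2 : (1 - t) ^ 2 * (b1 ^ 2 * d + b2 ^ 2) ≤ (1 - t) ^ 2 * d :=
    mul_le_mul_of_nonneg_left hQb (sq_nonneg (1 - t))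
  have hid : t ^ 2 * d + 2 * t * (1 - t) * d + (1 - t) ^ 2 * d = d := by ring
  have hpos : 0 < 2 * t * (1 - t) := mul_pos (by linarith) ht1'
  have hB : d ≤ a1 * b1 * d + a2 * b2 :=
    (mul_le_mul_iff_right₀ hpos).mp (by linarith)
  have hCS : (a1 * b1 * d + a2 * b2) ^ 2 ≤ (a1 ^ 2 * d + a2 ^ 2) * (b1 ^ 2 * d + b2 ^ 2) := by
    nlinarith [mul_nonneg hd.le (sq_nonneg (a1 * b2 - a2 * b1))]
  have hQapos : 0 ≤ a1 ^ 2 * d + a2 ^ 2 := by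
    nlinarith [mul_nonneg (sq_nonneg a1) hd.le, sq_nonneg a2]
  have hQbpos : 0 ≤ b1 ^ 2 * d + b2 ^ 2 := by
    nlinarith [mul_nonneg (sq_nonneg b1) hd.le, sq_nonneg b2]
  have hd2 : d ^ 2 ≤ (a1 * b1 * d + a2 * b2) ^ 2 := pow_le_pow_left₀ hd.le hB 2
  have e1 : 0 ≤ (d - (a1 ^ 2 * d + a2 ^ 2)) * (b1 ^ 2 * d + b2 ^ 2) :=
    mul_nonneg (sub_nonneg.2 hQa) hQbpos
  have e2 : 0 ≤ (d - (b1 ^ 2 * d + b2 ^ 2)) * (a1 ^ 2 * d + a2 ^ 2) :=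
    mul_nonneg (sub_nonneg.2 hQb) hQapos
  have hQbge : d ≤ b1 ^ 2 * d + b2 ^ 2 := aux_ge hd hQa hQbpos hCS hd2
  have hQage : d ≤ a1 ^ 2 * d + a2 ^ 2 :=
    aux_ge hd hQb hQapos (by nlinarith [hCS]) hd2
  have hQa' : a1 ^ 2 * d + a2 ^ 2 = d := le_antisymm hQa hQage
  have hQb' : b1 ^ 2 * d + b2 ^ 2 = d := le_antisymm hQb hQbge
  have hB' : a1 * b1 * d + a2 * b2 = d :=
    aux_le hd hB (by rw [hQa', hQb'] at hCS; nlinarith [hCS])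
  have hzero : (a1 - b1) ^ 2 * d + (a2 - b2) ^ 2 = 0 := by
    linear_combination hQa' + hQb' - 2 * hB'
  have z1 : (a1 - b1) ^ 2 = 0 := by
    have hle : (a1 - b1) ^ 2 * d ≤ 0 := by linarith [sq_nonneg (a2 - b2)]
    have hge : 0 ≤ (a1 - b1) ^ 2 * d := mul_nonneg (sq_nonneg _) hd.le
    have := le_antisymm hle hge
    exact (mul_eq_zero.mp this).resolve_right hd.ne'
  have z2 : (a2 - b2) ^ 2 = 0 := by
    linarith [mul_nonneg (sq_nonneg (a1 - b1)) hd.le, sq_nonneg (a2 - b2)]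
  exact ⟨sub_eq_zero.mp (sq_eq_zero_iff.mp z1), sub_eq_zero.mp (sq_eq_zero_iff.mp z2)⟩

/-- Strict convexity of the elliptical table. -/
lemma strict_convex {c : ℝ} (hc0 : 0 < c) (hc1 : c < 1) {a b y : ℝ × ℝ}
    (ha : a ∈ tableT c) (hb : b ∈ tableT c) (hy : y ∈ ellipseC c) {t : ℝ}
    (ht0 : 0 < t) (ht1 : t < 1) (hcomb : y = t • a + (1 - t) • b) : a = b := by
  have hd : 0 < 1 - c ^ 2 := by nlinarith
  have ha' : a.1 ^ 2 + a.2 ^ 2 / (1 - c ^ 2) ≤ 1 := ha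
  have hb' : b.1 ^ 2 + b.2 ^ 2 / (1 - c ^ 2) ≤ 1 := hb
  have hy' : y.1 ^ 2 + y.2 ^ 2 / (1 - c ^ 2) = 1 := hy
  have hQa := table_ineq hd ha'
  have hQb := table_ineq hd hb'
  have hQy := table_eq hd hy'
  have hy1 : y.1 = t * a.1 + (1 - t) * b.1 := by rw [hcomb]; simp
  have hy2 : y.2 = t * a.2 + (1 - t) * b.2 := by rw [hcomb]; simp
  rw [hy1, hy2] at hQy
  obtain ⟨h1, h2⟩ := quad_sc hd hQa hQb hQy ht0 ht1
  exact Prod.ext h1 h2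

/-- Equality in the triangle inequality forces a strict convex combination. -/
lemma eq_case {a b y : ℝ × ℝ} (h : nrm (y - a) + nrm (b - y) = nrm (b - a))
    (hya : y ≠ a) (hyb : y ≠ b) : ∃ t : ℝ, 0 < t ∧ t < 1 ∧ y = t • a + (1 - t) • b := by
  set v := y - a with hv
  set w := b - y with hw
  have hvne : v ≠ 0 := sub_ne_zero.2 hya
  have hwne : w ≠ 0 := sub_ne_zero.2 (Ne.symm hyb)
  have hvw : v + w = b - a := by rw [hv, hw]; abel
  have hsq : ip v w = nrm v * nrm w := by
    have h2 : nrm (v + w) * nrm (v + w) = (nrm v + nrm w) * (nrm v + nrm w) := by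
      rw [hvw, ← h]
    rw [nrm_mul_self] at h2
    have h3 : ip (v + w) (v + w) = ip v v + 2 * ip v w + ip w w := by
      simp only [ip, Prod.fst_add, Prod.snd_add]; ring
    have h4 := nrm_mul_self v; have h5 := nrm_mul_self w
    nlinarith [h2, h3]
  have hipvv : 0 < ip v v := ip_self_pos hvne
  have hipww : 0 < ip w w := ip_self_pos hwne
  have hm : 0 < ip v w := by
    rw [hsq]; exact mul_pos (nrm_pos hvne) (nrm_pos hwne)
  set s := ip v w / ip v v with hs
  have hspos : 0 < s := div_pos hm hipvv
  have hcross : ip v v * ip w w - ip v w ^ 2 = 0 := by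
    have h6 : ip v w ^ 2 = (nrm v * nrm w) ^ 2 := by rw [hsq]
    have h4 := nrm_mul_self v; have h5 := nrm_mul_self w
    nlinarith [h6]
  have hwsv : w = s • v := by
    have expand : ip (w - s • v) (w - s • v)
        = ip w w - 2 * s * ip v w + s ^ 2 * ip v v := by
      simp only [ip, Prod.fst_sub, Prod.snd_sub, Prod.smul_fst, Prod.smul_snd,
        smul_eq_mul]
      ring
    have hq : ip (w - s • v) (w - s • v) = 0 := by
      rw [expand, hs]
      field_simp
      linear_combination hcross
    exact sub_eq_zero.mp (eq_zero_of_ip_self hq)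
  refine ⟨s / (1 + s), div_pos hspos (by linarith), ?_, ?_⟩
  · rw [div_lt_one (by linarith)]; linarith
  · have hb1 : b.1 - y.1 = s * (y.1 - a.1) := by
      have := congrArg Prod.fst hwsv
      simpa [hw, hv] using this
    have hb2 : b.2 - y.2 = s * (y.2 - a.2) := by
      have := congrArg Prod.snd hwsv
      simpa [hw, hv] using this
    have h1s : (1 + s) ≠ 0 := by positivity
    apply Prod.ext
    · show y.1 = (s / (1 + s)) * a.1 + (1 - s / (1 + s)) * b.1
      field_simp
      linear_combination -hb1
    · show y.2 = (s / (1 + s)) * a.2 + (1 - s / (1 + s)) * b.2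
      field_simp
      linear_combination -hb2

lemma strict_tri {c : ℝ} (hc0 : 0 < c) (hc1 : c < 1) {a b y : ℝ × ℝ}
    (ha : a ∈ tableT c) (hb : b ∈ tableT c) (hy : y ∈ ellipseC c)
    (hya : y ≠ a) (hyb : y ≠ b) : nrm (b - a) < nrm (y - a) + nrm (b - y) := by
  have habel : y - a + (b - y) = b - a := by abel
  have hle : nrm (b - a) ≤ nrm (y - a) + nrm (b - y) := by
    rw [← habel]; exact nrm_triangle _ _
  rcases hle.lt_or_eq with h | h
  · exact h
  · exfalso
    obtain ⟨t, ht0, ht1, hcomb⟩ := eq_case h.symm hya hyb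
    have hab := strict_convex hc0 hc1 ha hb hy ht0 ht1 hcomb
    apply hya
    rw [hcomb, hab, ← add_smul]
    simp

lemma exists_third (c : ℝ) (hc0 : 0 < c) (hc1 : c < 1) (a b : ℝ × ℝ) :
    ∃ y ∈ ellipseC c, y ≠ a ∧ y ≠ b := by
  have hd : (0:ℝ) < 1 - c ^ 2 := by nlinarith
  have h1 : ((1:ℝ), (0:ℝ)) ∈ ellipseC c := by simp [ellipseC]
  have h2 : ((-1:ℝ), (0:ℝ)) ∈ ellipseC c := by norm_num [ellipseC]
  have h3 : ((0:ℝ), Real.sqrt (1 - c ^ 2)) ∈ ellipseC c := by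
    simp [ellipseC, Real.sq_sqrt hd.le, div_self hd.ne']
  by_cases c1 : ((1:ℝ), (0:ℝ)) ≠ a ∧ ((1:ℝ), (0:ℝ)) ≠ b
  · exact ⟨_, h1, c1⟩
  by_cases c2 : ((-1:ℝ), (0:ℝ)) ≠ a ∧ ((-1:ℝ), (0:ℝ)) ≠ b
  · exact ⟨_, h2, c2⟩
  have k1 : ((1:ℝ), (0:ℝ)) = a ∨ ((1:ℝ), (0:ℝ)) = b := by tauto
  have k2 : ((-1:ℝ), (0:ℝ)) = a ∨ ((-1:ℝ), (0:ℝ)) = b := by tauto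
  have n1 : ((0:ℝ), Real.sqrt (1 - c ^ 2)) ≠ ((1:ℝ), (0:ℝ)) := by
    intro h; have := congrArg Prod.fst h; norm_num at this
  have n2 : ((0:ℝ), Real.sqrt (1 - c ^ 2)) ≠ ((-1:ℝ), (0:ℝ)) := by
    intro h; have := congrArg Prod.fst h; norm_num at this
  have hdiff : ((1:ℝ), (0:ℝ)) ≠ ((-1:ℝ), (0:ℝ)) := by
    intro h; have := congrArg Prod.fst h; norm_num at this
  refine ⟨_, h3, ?_, ?_⟩
  · rcases k1 with k1 | k1
    · rw [← k1]; exact n1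
    · rcases k2 with k2 | k2
      · rw [← k2]; exact n2
      · exact absurd (k1.trans k2.symm) hdiff
  · rcases k1 with k1 | k1
    · rcases k2 with k2 | k2
      · exact absurd (k1.trans k2.symm) hdiff
      · rw [← k2]; exact n2
    · rw [← k1]; exact n1

lemma nrm_zero : nrm 0 = 0 := by simp [nrm, ip]

lemma max_ne {c : ℝ} (hc0 : 0 < c) (hc1 : c < 1) {a b x : ℝ × ℝ}
    (ha : a ∈ tableT c) (hb : b ∈ tableT c) (hx : x ∈ ellipseC c)
    (hmax : ∀ y ∈ ellipseC c, nrm (y - a) + nrm (b - y) ≤ nrm (x - a) + nrm (b - x)) :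
    x ≠ a ∧ x ≠ b := by
  obtain ⟨y, hy, hya, hyb⟩ := exists_third c hc0 hc1 a b
  have h := hmax y hy
  have hstrict := strict_tri hc0 hc1 ha hb hy hya hyb
  constructor
  · intro hxa
    rw [hxa, sub_self, nrm_zero] at h
    have htr : nrm (b - a) ≤ nrm (b - a) + 0 := by
      have := nrm_nonneg (b - a); linarith
    linarith
  · intro hxb
    rw [hxb, sub_self, nrm_zero] at h
    linarith

lemma exists_param {c : ℝ} (hc0 : 0 < c) (hc1 : c < 1) {x : ℝ × ℝ}
    (hx : x ∈ ellipseC c) :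
    ∃ t₀ : ℝ, x = (Real.cos t₀, Real.sqrt (1 - c ^ 2) * Real.sin t₀) := by
  have hd : (0:ℝ) < 1 - c ^ 2 := by nlinarith
  have hx' : x.1 ^ 2 + x.2 ^ 2 / (1 - c ^ 2) = 1 := hx
  have hq := table_eq hd hx'
  have hsq : x.2 ^ 2 = (1 - c ^ 2) * (1 - x.1 ^ 2) := by linear_combination hq
  have h2pos : 0 ≤ x.2 ^ 2 := sq_nonneg _
  have h1le : x.1 ^ 2 ≤ 1 := by nlinarith
  have hx1u : x.1 ≤ 1 := by nlinarith
  have hx1l : -1 ≤ x.1 := by nlinarith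
  have h1sub : (0:ℝ) ≤ 1 - x.1 ^ 2 := by nlinarith
  rcases le_or_gt 0 x.2 with h2 | h2
  · refine ⟨Real.arccos x.1, ?_⟩
    apply Prod.ext
    · exact (Real.cos_arccos hx1l hx1u).symm
    · show x.2 = Real.sqrt (1 - c ^ 2) * Real.sin (Real.arccos x.1)
      rw [Real.sin_arccos, ← Real.sqrt_mul hd.le]
      rw [← hsq, Real.sqrt_sq h2]
  · refine ⟨-Real.arccos x.1, ?_⟩
    apply Prod.ext
    · rw [Real.cos_neg]; exact (Real.cos_arccos hx1l hx1u).symm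
    · show x.2 = Real.sqrt (1 - c ^ 2) * Real.sin (-Real.arccos x.1)
      rw [Real.sin_neg, Real.sin_arccos, mul_neg, ← Real.sqrt_mul hd.le]
      rw [← hsq, Real.sqrt_sq_eq_abs, abs_of_neg h2, neg_neg]

lemma hasDerivAt_dist_left (a : ℝ × ℝ) (β t₀ : ℝ)
    (h : ((Real.cos t₀, β * Real.sin t₀) : ℝ × ℝ) ≠ a) :
    HasDerivAt (fun t => nrm ((Real.cos t, β * Real.sin t) - a))
      (ip ((Real.cos t₀, β * Real.sin t₀) - a) (-Real.sin t₀, β * Real.cos t₀)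
        / nrm ((Real.cos t₀, β * Real.sin t₀) - a)) t₀ := by
  have hip : ip ((Real.cos t₀, β * Real.sin t₀) - a)
      ((Real.cos t₀, β * Real.sin t₀) - a) ≠ 0 := (ip_self_pos (sub_ne_zero.2 h)).ne'
  have hq : HasDerivAt (fun t => (Real.cos t - a.1) ^ 2 + (β * Real.sin t - a.2) ^ 2)
      (2 * (Real.cos t₀ - a.1) ^ 1 * (-Real.sin t₀)
        + 2 * (β * Real.sin t₀ - a.2) ^ 1 * (β * Real.cos t₀)) t₀ := by
    have h1 := ((Real.hasDerivAt_cos t₀).sub_const a.1).pow 2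
    have h2 := (((Real.hasDerivAt_sin t₀).const_mul β).sub_const a.2).pow 2
    norm_num at h1 h2 ⊢
    exact h1.add h2
  have hfq : ∀ t : ℝ, nrm ((Real.cos t, β * Real.sin t) - a)
      = Real.sqrt ((Real.cos t - a.1) ^ 2 + (β * Real.sin t - a.2) ^ 2) := by
    intro t
    simp only [nrm, ip, Prod.fst_sub, Prod.snd_sub]
    ring_nf
  have hq0 : (Real.cos t₀ - a.1) ^ 2 + (β * Real.sin t₀ - a.2) ^ 2 ≠ 0 := by
    intro h0; apply hip
    simp only [ip, Prod.fst_sub, Prod.snd_sub]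
    nlinarith [h0]
  have key := hq.sqrt hq0
  have hA : 2 * (Real.cos t₀ - a.1) ^ 1 * (-Real.sin t₀)
      + 2 * (β * Real.sin t₀ - a.2) ^ 1 * (β * Real.cos t₀)
      = 2 * ip ((Real.cos t₀, β * Real.sin t₀) - a) (-Real.sin t₀, β * Real.cos t₀) := by
    simp only [ip, Prod.fst_sub, Prod.snd_sub]; ring
  simpa only [← hfq, hA, mul_div_mul_left _ _ (two_ne_zero (α := ℝ))] using key

lemma hasDerivAt_dist_right (b : ℝ × ℝ) (β t₀ : ℝ)
    (h : ((Real.cos t₀, β * Real.sin t₀) : ℝ × ℝ) ≠ b) :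
    HasDerivAt (fun t => nrm (b - (Real.cos t, β * Real.sin t)))
      (-(ip (b - (Real.cos t₀, β * Real.sin t₀)) (-Real.sin t₀, β * Real.cos t₀))
        / nrm (b - (Real.cos t₀, β * Real.sin t₀))) t₀ := by
  have hip : ip (b - (Real.cos t₀, β * Real.sin t₀))
      (b - (Real.cos t₀, β * Real.sin t₀)) ≠ 0 :=
    (ip_self_pos (sub_ne_zero.2 (Ne.symm h))).ne'
  have hq : HasDerivAt (fun t => (b.1 - Real.cos t) ^ 2 + (b.2 - β * Real.sin t) ^ 2)
      (2 * (b.1 - Real.cos t₀) ^ 1 * (Real.sin t₀)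
        + 2 * (b.2 - β * Real.sin t₀) ^ 1 * (-(β * Real.cos t₀))) t₀ := by
    have h1 := ((Real.hasDerivAt_cos t₀).const_sub b.1).pow 2
    have h2 := (((Real.hasDerivAt_sin t₀).const_mul β).const_sub b.2).pow 2
    norm_num at h1 h2 ⊢
    have h3 := h1.add h2
    exact h3
    try ring
  have hfq : ∀ t : ℝ, nrm (b - (Real.cos t, β * Real.sin t))
      = Real.sqrt ((b.1 - Real.cos t) ^ 2 + (b.2 - β * Real.sin t) ^ 2) := by
    intro t
    simp only [nrm, ip, Prod.fst_sub, Prod.snd_sub]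
    ring_nf
  have hq0 : (b.1 - Real.cos t₀) ^ 2 + (b.2 - β * Real.sin t₀) ^ 2 ≠ 0 := by
    intro h0; apply hip
    simp only [ip, Prod.fst_sub, Prod.snd_sub]
    nlinarith [h0]
  have key := hq.sqrt hq0
  have hA : 2 * (b.1 - Real.cos t₀) ^ 1 * (Real.sin t₀)
      + 2 * (b.2 - β * Real.sin t₀) ^ 1 * (-(β * Real.cos t₀))
      = 2 * (-(ip (b - (Real.cos t₀, β * Real.sin t₀)) (-Real.sin t₀, β * Real.cos t₀))) := by
    simp only [ip, Prod.fst_sub, Prod.snd_sub]; ring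
  simpa only [← hfq, hA, mul_div_mul_left _ _ (two_ne_zero (α := ℝ))] using key

lemma ip_smul_left (s : ℝ) (v w : ℝ × ℝ) : ip (s • v) w = s * ip v w := by
  simp only [ip, Prod.smul_fst, Prod.smul_snd, smul_eq_mul]; ring

lemma ip_sub_left (u v w : ℝ × ℝ) : ip (u - v) w = ip u w - ip v w := by
  simp only [ip, Prod.fst_sub, Prod.snd_sub]; ring

lemma ip_comm (v w : ℝ × ℝ) : ip v w = ip w v := by
  simp only [ip]; ring

lemma ip_self_unit {v : ℝ × ℝ} (h : v ≠ 0) :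
    ip ((nrm v)⁻¹ • v) ((nrm v)⁻¹ • v) = 1 := by
  have h1 : ip ((nrm v)⁻¹ • v) ((nrm v)⁻¹ • v) = (nrm v)⁻¹ * ((nrm v)⁻¹ * ip v v) := by
    simp only [ip, Prod.smul_fst, Prod.smul_snd, smul_eq_mul]; ring
  rw [h1, ← nrm_mul_self]
  field_simp [nrm_ne_zero h]

lemma ortho2 {v n τ : ℝ × ℝ} (h1 : ip v τ = 0) (h2 : ip n τ = 0) (hτ : τ ≠ 0) :
    v.1 * n.2 - v.2 * n.1 = 0 := by
  simp only [ip] at h1 h2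
  have hτ' : τ.1 ≠ 0 ∨ τ.2 ≠ 0 := by
    by_contra h'; push_neg at h'; exact hτ (Prod.ext h'.1 h'.2)
  rcases hτ' with h | h
  · apply mul_left_cancel₀ h
    rw [mul_zero]
    linear_combination n.2 * h1 - v.2 * h2
  · apply mul_left_cancel₀ h
    rw [mul_zero]
    linear_combination v.1 * h2 - n.1 * h1

lemma parallel_of_cross {v n : ℝ × ℝ} (hn : n ≠ 0)
    (hcross : v.1 * n.2 - v.2 * n.1 = 0) : v = (ip v n / ip n n) • n := by
  have hip := (ip_self_pos hn).ne'
  apply Prod.ext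
  · show v.1 = (ip v n / ip n n) * n.1
    rw [div_mul_eq_mul_div, eq_div_iff hip]
    simp only [ip]
    linear_combination n.2 * hcross
  · show v.2 = (ip v n / ip n n) * n.2
    rw [div_mul_eq_mul_div, eq_div_iff hip]
    simp only [ip]
    linear_combination (-n.1) * hcross

lemma reflect_at_max {c : ℝ} (hc0 : 0 < c) (hc1 : c < 1) {a b x : ℝ × ℝ}
    (ha : a ∈ tableT c) (hb : b ∈ tableT c) (hx : x ∈ ellipseC c)
    (hmax : ∀ y ∈ ellipseC c, nrm (y - a) + nrm (b - y) ≤ nrm (x - a) + nrm (b - x)) :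
    (nrm (b - x))⁻¹ • (b - x)
      = (nrm (x - a))⁻¹ • (x - a)
        - (2 * ip ((nrm (x - a))⁻¹ • (x - a)) (nuC c x)) • nuC c x := by
  obtain ⟨hxa, hxb⟩ := max_ne hc0 hc1 ha hb hx hmax
  have hd : (0:ℝ) < 1 - c ^ 2 := by nlinarith
  set β := Real.sqrt (1 - c ^ 2) with hβdef
  have hβ2 : β ^ 2 = 1 - c ^ 2 := Real.sq_sqrt hd.le
  have hβpos : 0 < β := Real.sqrt_pos.2 hd
  obtain ⟨t₀, hxt⟩ := exists_param hc0 hc1 hx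
  have hmem : ∀ t : ℝ, ((Real.cos t, β * Real.sin t) : ℝ × ℝ) ∈ ellipseC c := by
    intro t
    show (Real.cos t) ^ 2 + (β * Real.sin t) ^ 2 / (1 - c ^ 2) = 1
    rw [mul_pow, hβ2]
    field_simp
    exact Real.cos_sq_add_sin_sq t
  have hloc : IsLocalMax (fun t => nrm ((Real.cos t, β * Real.sin t) - a)
      + nrm (b - (Real.cos t, β * Real.sin t))) t₀ := by
    have hall : ∀ t : ℝ, nrm ((Real.cos t, β * Real.sin t) - a)
        + nrm (b - (Real.cos t, β * Real.sin t))
        ≤ nrm ((Real.cos t₀, β * Real.sin t₀) - a)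
          + nrm (b - (Real.cos t₀, β * Real.sin t₀)) := by
      intro t
      rw [← hxt]
      exact hmax _ (hmem t)
    exact Filter.Eventually.of_forall hall
  have hD1 := hasDerivAt_dist_left a β t₀ (by rw [← hxt]; exact hxa)
  have hD2 := hasDerivAt_dist_right b β t₀ (by rw [← hxt]; exact hxb)
  have hzero := hloc.hasDerivAt_eq_zero (hD1.add hD2)
  rw [← hxt] at hzero
  set τ : ℝ × ℝ := (-Real.sin t₀, β * Real.cos t₀) with hτdef
  have hr1p : 0 < nrm (x - a) := nrm_pos (sub_ne_zero.2 hxa)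
  have hr2p : 0 < nrm (b - x) := nrm_pos (sub_ne_zero.2 (Ne.symm hxb))
  have E1 : ip (x - a) τ * nrm (b - x) = ip (b - x) τ * nrm (x - a) := by
    field_simp at hzero
    linarith [hzero]
  have hvecτ : ip ((nrm (x - a))⁻¹ • (x - a) - (nrm (b - x))⁻¹ • (b - x)) τ = 0 := by
    rw [ip_sub_left, ip_smul_left, ip_smul_left]
    field_simp
    linarith [E1]
  set nv : ℝ × ℝ := (x.1, x.2 / (1 - c ^ 2)) with hnvdef
  have hnvne : nv ≠ 0 := by
    intro h0
    have h1 : x.1 = 0 := congrArg Prod.fst h0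
    have h2 : x.2 / (1 - c ^ 2) = 0 := congrArg Prod.snd h0
    have h2' : x.2 = 0 := by
      rcases div_eq_zero_iff.mp h2 with h | h
      · exact h
      · exact absurd h hd.ne'
    have hx' : x.1 ^ 2 + x.2 ^ 2 / (1 - c ^ 2) = 1 := hx
    rw [h1, h2'] at hx'
    norm_num at hx'
  have hNn := nrm_ne_zero hnvne
  have hτn : ip nv τ = 0 := by
    have hx1 : x.1 = Real.cos t₀ := by rw [hxt]
    have hx2 : x.2 = β * Real.sin t₀ := by rw [hxt]
    show nv.1 * τ.1 + nv.2 * τ.2 = 0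
    rw [hnvdef, hτdef]
    simp only []
    rw [hx1, hx2]
    field_simp
    linear_combination Real.sin t₀ * Real.cos t₀ * hβ2
  have hτne : τ ≠ 0 := by
    intro h0
    have h1 : -Real.sin t₀ = 0 := congrArg Prod.fst h0
    have h2 : β * Real.cos t₀ = 0 := congrArg Prod.snd h0
    have hcos : Real.cos t₀ = 0 := by
      rcases mul_eq_zero.mp h2 with h | h
      · exact absurd h hβpos.ne'
      · exact h
    have hsin : Real.sin t₀ = 0 := by linarith
    nlinarith [Real.sin_sq_add_cos_sq t₀]
  set N := nuC c x with hNdef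
  have hNeq : N = (nrm nv)⁻¹ • nv := rfl
  set u := (nrm (x - a))⁻¹ • (x - a) with hu
  set w := (nrm (b - x))⁻¹ • (b - x) with hw
  have hcross := ortho2 hvecτ hτn hτne
  have hpar := parallel_of_cross hnvne hcross
  have hsc : ∀ v : ℝ × ℝ, (ip v N) • N = (ip v nv / ip nv nv) • nv := by
    intro v
    rw [hNeq, smul_smul]
    have h1 : ip v ((nrm nv)⁻¹ • nv) = (nrm nv)⁻¹ * ip v nv := by
      rw [ip_comm, ip_smul_left, ip_comm]
    rw [h1]
    congr 1
    rw [← nrm_mul_self]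
    field_simp
  have hvN : u - w = (ip (u - w) N) • N := by
    rw [hsc]
    exact hpar
  have hipuu : ip u u = 1 := ip_self_unit (sub_ne_zero.2 hxa)
  have hipww : ip w w = 1 := ip_self_unit (sub_ne_zero.2 (Ne.symm hxb))
  have hipNN : ip N N = 1 := by rw [hNeq]; exact ip_self_unit hnvne
  set μ := ip (u - w) N with hμ
  have hwu : w = u - μ • N := by
    rw [← hvN]
    abel
  have hq2 : ip w w = ip u u - 2 * μ * ip u N + μ ^ 2 * ip N N := by
    rw [hwu]
    simp only [ip, Prod.fst_sub, Prod.snd_sub, Prod.smul_fst, Prod.smul_snd,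
      smul_eq_mul]
    ring
  have hμeq : μ * (μ - 2 * ip u N) = 0 := by
    rw [hipww, hipuu, hipNN] at hq2
    linear_combination -hq2
  rcases mul_eq_zero.mp hμeq with h0 | h0
  · exfalso
    have huw : u = w := by
      have h1 : u - w = 0 := by rw [hvN, h0, zero_smul]
      rwa [sub_eq_zero] at h1
    have hxa' : x - a = nrm (x - a) • u := by
      rw [hu, smul_smul, mul_inv_cancel₀ hr1p.ne', one_smul]
    have hbx' : b - x = nrm (b - x) • u := by
      rw [huw, hw, smul_smul, mul_inv_cancel₀ hr2p.ne', one_smul]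
    have hr12 : 0 < nrm (x - a) + nrm (b - x) := by linarith
    have hT0 : 0 < nrm (b - x) / (nrm (x - a) + nrm (b - x)) := div_pos hr2p hr12
    have hT1 : nrm (b - x) / (nrm (x - a) + nrm (b - x)) < 1 := by
      rw [div_lt_one hr12]; linarith
    have ha1 : a.1 = x.1 - nrm (x - a) * u.1 := by
      have := congrArg Prod.fst hxa'
      simp only [Prod.fst_sub, Prod.smul_fst, smul_eq_mul] at this
      linarith
    have ha2 : a.2 = x.2 - nrm (x - a) * u.2 := by
      have := congrArg Prod.snd hxa'
      simp only [Prod.snd_sub, Prod.smul_snd, smul_eq_mul] at this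
      linarith
    have hb1 : b.1 = x.1 + nrm (b - x) * u.1 := by
      have := congrArg Prod.fst hbx'
      simp only [Prod.fst_sub, Prod.smul_fst, smul_eq_mul] at this
      linarith
    have hb2 : b.2 = x.2 + nrm (b - x) * u.2 := by
      have := congrArg Prod.snd hbx'
      simp only [Prod.snd_sub, Prod.smul_snd, smul_eq_mul] at this
      linarith
    have hcomb : x = (nrm (b - x) / (nrm (x - a) + nrm (b - x))) • a
        + (1 - nrm (b - x) / (nrm (x - a) + nrm (b - x))) • b := by
      apply Prod.ext
      · show x.1 = (nrm (b - x) / (nrm (x - a) + nrm (b - x))) * a.1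
            + (1 - nrm (b - x) / (nrm (x - a) + nrm (b - x))) * b.1
        rw [ha1, hb1]
        field_simp
        ring
      · show x.2 = (nrm (b - x) / (nrm (x - a) + nrm (b - x))) * a.2
            + (1 - nrm (b - x) / (nrm (x - a) + nrm (b - x))) * b.2
        rw [ha2, hb2]
        field_simp
        ring
    have hab := strict_convex hc0 hc1 ha hb hx hT0 hT1 hcomb
    have hsum : (nrm (x - a) + nrm (b - x)) • u = 0 := by
      rw [add_smul, ← hxa', ← hbx', hab]
      abel
    have hu0 : u = 0 := by
      rcases smul_eq_zero.mp hsum with h | h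
      · exact absurd h hr12.ne'
      · exact h
    rw [hu0] at hipuu
    simp [ip] at hipuu
  · have hμval : μ = 2 * ip u N := by linarith
    rw [hwu, hμval]

def Pfun (p₁ p₂ : ℝ × ℝ) (n : ℕ) (x : ℕ → ℝ × ℝ) (k : ℕ) : ℝ × ℝ :=
  if k = 0 then p₁ else if k ≤ n then x k else p₂

def Ffun (p₁ p₂ : ℝ × ℝ) (n : ℕ) (x : ℕ → ℝ × ℝ) : ℝ :=
  ∑ k ∈ Finset.range (n + 1), nrm (Pfun p₁ p₂ n x (k + 1) - Pfun p₁ p₂ n x k)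

lemma sum_two_diff {s : Finset ℕ} {i₁ i₂ : ℕ} (h₁ : i₁ ∈ s) (h₂ : i₂ ∈ s)
    (hne : i₁ ≠ i₂) {f g : ℕ → ℝ} (h : ∀ k ∈ s, k ≠ i₁ → k ≠ i₂ → f k = g k) :
    ∑ k ∈ s, f k - ∑ k ∈ s, g k = (f i₁ + f i₂) - (g i₁ + g i₂) := by
  have h2' : i₂ ∈ s.erase i₁ := Finset.mem_erase.mpr ⟨hne.symm, h₂⟩
  rw [← Finset.add_sum_erase s f h₁, ← Finset.add_sum_erase _ f h2',
      ← Finset.add_sum_erase s g h₁, ← Finset.add_sum_erase _ g h2']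
  have hrest : ∑ k ∈ (s.erase i₁).erase i₂, f k = ∑ k ∈ (s.erase i₁).erase i₂, g k :=
    Finset.sum_congr rfl (fun k hk => by
      have hk2 := Finset.mem_erase.mp hk
      have hk1 := Finset.mem_erase.mp hk2.2
      exact h k hk1.2 hk1.1 hk2.1)
  rw [hrest]; ring

lemma F_update (p₁ p₂ : ℝ × ℝ) (n : ℕ) (z : ℕ → ℝ × ℝ) (j : ℕ)
    (hj1 : 1 ≤ j) (hjn : j ≤ n) (y : ℝ × ℝ) :
    Ffun p₁ p₂ n (Function.update z j y) - Ffun p₁ p₂ n z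
      = (nrm (y - Pfun p₁ p₂ n z (j - 1)) + nrm (Pfun p₁ p₂ n z (j + 1) - y))
        - (nrm (z j - Pfun p₁ p₂ n z (j - 1)) + nrm (Pfun p₁ p₂ n z (j + 1) - z j)) := by
  have hPsame : ∀ k, k ≠ j →
      Pfun p₁ p₂ n (Function.update z j y) k = Pfun p₁ p₂ n z k := by
    intro k hk
    unfold Pfun
    split_ifs <;> simp [Function.update_of_ne hk]
  have hPj : Pfun p₁ p₂ n (Function.update z j y) j = y := by
    unfold Pfun
    rw [if_neg (by omega), if_pos hjn]
    simp
  have hPzj : Pfun p₁ p₂ n z j = z j := by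
    unfold Pfun; rw [if_neg (by omega), if_pos hjn]
  have hmem1 : j - 1 ∈ Finset.range (n + 1) := Finset.mem_range.mpr (by omega)
  have hmem2 : j ∈ Finset.range (n + 1) := Finset.mem_range.mpr (by omega)
  have hne : j - 1 ≠ j := by omega
  have hrest : ∀ k ∈ Finset.range (n + 1), k ≠ j - 1 → k ≠ j →
      nrm (Pfun p₁ p₂ n (Function.update z j y) (k + 1)
          - Pfun p₁ p₂ n (Function.update z j y) k)
        = nrm (Pfun p₁ p₂ n z (k + 1) - Pfun p₁ p₂ n z k) := by
    intro k _ hk1 hk2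
    rw [hPsame (k + 1) (by omega), hPsame k hk2]
  have hkey := sum_two_diff hmem1 hmem2 hne hrest
  unfold Ffun
  rw [hkey]
  have e1 : j - 1 + 1 = j := by omega
  rw [e1, hPj, hPsame (j - 1) hne, hPsame (j + 1) (by omega), hPzj]

lemma continuous_nrm : Continuous nrm := by
  have h : nrm = fun v : ℝ × ℝ => Real.sqrt (v.1 * v.1 + v.2 * v.2) := rfl
  rw [h]
  exact Real.continuous_sqrt.comp
    ((continuous_fst.mul continuous_fst).add (continuous_snd.mul continuous_snd))

lemma continuous_Pfun (p₁ p₂ : ℝ × ℝ) (n k : ℕ) :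
    Continuous (fun x : ℕ → ℝ × ℝ => Pfun p₁ p₂ n x k) := by
  by_cases h1 : k = 0
  · simp only [Pfun, if_pos h1]; exact continuous_const
  · by_cases h2 : k ≤ n
    · simp only [Pfun, if_neg h1, if_pos h2]; exact continuous_apply k
    · simp only [Pfun, if_neg h1, if_neg h2]; exact continuous_const

lemma continuous_Ffun (p₁ p₂ : ℝ × ℝ) (n : ℕ) : Continuous (Ffun p₁ p₂ n) := by
  unfold Ffun
  apply continuous_finset_sum
  intro k _
  exact continuous_nrm.comp
    ((continuous_Pfun p₁ p₂ n (k + 1)).sub (continuous_Pfun p₁ p₂ n k))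

lemma compact_ellipse (c : ℝ) (hc0 : 0 < c) (hc1 : c < 1) : IsCompact (ellipseC c) := by
  have hd : (0:ℝ) < 1 - c ^ 2 := by nlinarith
  have hclosed : IsClosed (ellipseC c) := by
    have h : ellipseC c
        = (fun q : ℝ × ℝ => q.1 ^ 2 + q.2 ^ 2 / (1 - c ^ 2)) ⁻¹' {1} := rfl
    rw [h]
    exact IsClosed.preimage
      (((continuous_fst.pow 2).add ((continuous_snd.pow 2).div_const _)))
      isClosed_singleton
  have hbdd : Bornology.IsBounded (ellipseC c) := by
    apply Bornology.IsBounded.subset (Metric.isBounded_closedBall (x := ((0, 0) : ℝ × ℝ)) (r := 1))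
    intro q hq
    have hq' : q.1 ^ 2 + q.2 ^ 2 / (1 - c ^ 2) = 1 := hq
    have hqq := table_eq hd hq'
    have h1 : q.1 ^ 2 ≤ 1 := by
      have h0 : 0 ≤ q.2 ^ 2 / (1 - c ^ 2) := by positivity
      linarith
    have h2 : q.2 ^ 2 ≤ 1 := by nlinarith [sq_nonneg q.1, sq_nonneg q.2]
    have ha1 : |q.1| ≤ 1 := by
      rw [← Real.sqrt_one, ← Real.sqrt_sq_eq_abs]
      exact Real.sqrt_le_sqrt h1
    have ha2 : |q.2| ≤ 1 := by
      rw [← Real.sqrt_one, ← Real.sqrt_sq_eq_abs]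
      exact Real.sqrt_le_sqrt h2
    rw [Metric.mem_closedBall, Prod.dist_eq]
    apply max_le
    · simpa [Real.dist_eq] using ha1
    · simpa [Real.dist_eq] using ha2
  exact Metric.isCompact_of_isClosed_isBounded hclosed hbdd

/-- For any two points `p₁, p₂` of the elliptical billiard table (not both foci) and any
`n ≥ 1`, there is a billiard trajectory from `p₁` to `p₂` with exactly `n` bounces. -/
theorem billiard_trajectory_exists (c : ℝ) (hc0 : 0 < c) (hc1 : c < 1)
    (p₁ p₂ : ℝ × ℝ) (hp₁ : p₁ ∈ tableT c) (hp₂ : p₂ ∈ tableT c)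
    (hfoci : ¬ (IsFocus c p₁ ∧ IsFocus c p₂)) :
    ∀ n : ℕ, 1 ≤ n →
      ∃ x u : ℕ → ℝ × ℝ,
        (∀ j, 1 ≤ j → j ≤ n → x j ∈ ellipseC c) ∧
        x 1 ≠ p₁ ∧ x n ≠ p₂ ∧
        (∀ j, 1 ≤ j → j ≤ n - 1 → x (j + 1) ≠ x j) ∧
        u 0 = (nrm (x 1 - p₁))⁻¹ • (x 1 - p₁) ∧
        (∀ j, 1 ≤ j → j ≤ n - 1 →
          u j = (nrm (x (j + 1) - x j))⁻¹ • (x (j + 1) - x j)) ∧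
        u n = (nrm (p₂ - x n))⁻¹ • (p₂ - x n) ∧
        (∀ j, 1 ≤ j → j ≤ n →
          u j = u (j - 1) - (2 * ip (u (j - 1)) (nuC c (x j))) • nuC c (x j)) := by
  intro n hn
  have hcomp : IsCompact (Set.pi Set.univ (fun _ : ℕ => ellipseC c)) :=
    isCompact_univ_pi (fun _ => compact_ellipse c hc0 hc1)
  have hSne : (Set.pi Set.univ (fun _ : ℕ => ellipseC c)).Nonempty := by
    refine ⟨fun _ => (1, 0), ?_⟩
    intro k _
    simp [ellipseC]
  obtain ⟨z, hzS, hzmax⟩ :=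
    hcomp.exists_isMaxOn hSne (continuous_Ffun p₁ p₂ n).continuousOn
  have hzC : ∀ k, z k ∈ ellipseC c := fun k => Set.mem_univ_pi.mp hzS k
  have hCsubT : ∀ q ∈ ellipseC c, q ∈ tableT c := fun q hq => le_of_eq hq
  have hPT : ∀ k, Pfun p₁ p₂ n z k ∈ tableT c := by
    intro k
    by_cases h1 : k = 0
    · simp only [Pfun, if_pos h1]; exact hp₁
    · by_cases h2 : k ≤ n
      · simp only [Pfun, if_neg h1, if_pos h2]; exact hCsubT _ (hzC k)
      · simp only [Pfun, if_neg h1, if_neg h2]; exact hp₂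
  have hcoord : ∀ j, 1 ≤ j → j ≤ n → ∀ y ∈ ellipseC c,
      nrm (y - Pfun p₁ p₂ n z (j - 1)) + nrm (Pfun p₁ p₂ n z (j + 1) - y)
        ≤ nrm (z j - Pfun p₁ p₂ n z (j - 1)) + nrm (Pfun p₁ p₂ n z (j + 1) - z j) := by
    intro j hj1 hjn y hy
    have hupd : Function.update z j y ∈ Set.pi Set.univ (fun _ : ℕ => ellipseC c) := by
      intro k _
      rcases eq_or_ne k j with rfl | hk
      · simpa [Function.update_self] using hy
      · simpa [Function.update_of_ne hk] using hzC k
    have hle : Ffun p₁ p₂ n (Function.update z j y) ≤ Ffun p₁ p₂ n z := hzmax hupd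
    have hdiff := F_update p₁ p₂ n z j hj1 hjn y
    linarith
  have hne' : ∀ j, 1 ≤ j → j ≤ n →
      z j ≠ Pfun p₁ p₂ n z (j - 1) ∧ z j ≠ Pfun p₁ p₂ n z (j + 1) :=
    fun j hj1 hjn =>
      max_ne hc0 hc1 (hPT (j - 1)) (hPT (j + 1)) (hzC j) (hcoord j hj1 hjn)
  have hrefl : ∀ j, 1 ≤ j → j ≤ n →
      (nrm (Pfun p₁ p₂ n z (j + 1) - z j))⁻¹ • (Pfun p₁ p₂ n z (j + 1) - z j)
        = (nrm (z j - Pfun p₁ p₂ n z (j - 1)))⁻¹ • (z j - Pfun p₁ p₂ n z (j - 1))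
          - (2 * ip ((nrm (z j - Pfun p₁ p₂ n z (j - 1)))⁻¹
              • (z j - Pfun p₁ p₂ n z (j - 1))) (nuC c (z j))) • nuC c (z j) :=
    fun j hj1 hjn =>
      reflect_at_max hc0 hc1 (hPT (j - 1)) (hPT (j + 1)) (hzC j) (hcoord j hj1 hjn)
  have hP0 : Pfun p₁ p₂ n z 0 = p₁ := by simp [Pfun]
  have hPmid : ∀ k, 1 ≤ k → k ≤ n → Pfun p₁ p₂ n z k = z k := by
    intro k h1 h2
    simp only [Pfun, if_neg (by omega : ¬ k = 0), if_pos h2]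
  have hPend : Pfun p₁ p₂ n z (n + 1) = p₂ := by
    simp only [Pfun, if_neg (by omega : ¬ n + 1 = 0), if_neg (by omega : ¬ n + 1 ≤ n)]
  refine ⟨z, fun j => (nrm (Pfun p₁ p₂ n z (j + 1) - Pfun p₁ p₂ n z j))⁻¹
      • (Pfun p₁ p₂ n z (j + 1) - Pfun p₁ p₂ n z j),
    fun j _ _ => hzC j, ?_, ?_, ?_, ?_, ?_, ?_, ?_⟩
  · have h := (hne' 1 le_rfl hn).1
    rwa [show (1:ℕ) - 1 = 0 from rfl, hP0] at h
  · have h := (hne' n hn le_rfl).2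
    rwa [hPend] at h
  · intro j hj1 hjn'
    have h := (hne' j hj1 (by omega)).2
    rw [hPmid (j + 1) (by omega) (by omega)] at h
    exact h.symm
  · show (nrm (Pfun p₁ p₂ n z (0 + 1) - Pfun p₁ p₂ n z 0))⁻¹
        • (Pfun p₁ p₂ n z (0 + 1) - Pfun p₁ p₂ n z 0)
      = (nrm (z 1 - p₁))⁻¹ • (z 1 - p₁)
    rw [show (0:ℕ) + 1 = 1 from rfl, hPmid 1 le_rfl hn, hP0]
  · intro j hj1 hjn'
    show (nrm (Pfun p₁ p₂ n z (j + 1) - Pfun p₁ p₂ n z j))⁻¹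
        • (Pfun p₁ p₂ n z (j + 1) - Pfun p₁ p₂ n z j)
      = (nrm (z (j + 1) - z j))⁻¹ • (z (j + 1) - z j)
    rw [hPmid (j + 1) (by omega) (by omega), hPmid j hj1 (by omega)]
  · show (nrm (Pfun p₁ p₂ n z (n + 1) - Pfun p₁ p₂ n z n))⁻¹
        • (Pfun p₁ p₂ n z (n + 1) - Pfun p₁ p₂ n z n)
      = (nrm (p₂ - z n))⁻¹ • (p₂ - z n)
    rw [hPend, hPmid n hn le_rfl]
  · intro j hj1 hjn
    show (nrm (Pfun p₁ p₂ n z (j + 1) - Pfun p₁ p₂ n z j))⁻¹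
        • (Pfun p₁ p₂ n z (j + 1) - Pfun p₁ p₂ n z j)
      = (nrm (Pfun p₁ p₂ n z (j - 1 + 1) - Pfun p₁ p₂ n z (j - 1)))⁻¹
          • (Pfun p₁ p₂ n z (j - 1 + 1) - Pfun p₁ p₂ n z (j - 1))
        - (2 * ip ((nrm (Pfun p₁ p₂ n z (j - 1 + 1) - Pfun p₁ p₂ n z (j - 1)))⁻¹
            • (Pfun p₁ p₂ n z (j - 1 + 1) - Pfun p₁ p₂ n z (j - 1))) (nuC c (z j)))
          • nuC c (z j)
    rw [show j - 1 + 1 = j from by omega, hPmid j hj1 hjn]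
    exact hrefl j hj1 hjn
end
end

section
/- Let τ ∈ ℂ with Im τ > 0 and L = {aτ + b : a, b ∈ ℤ}, and let α ∈ (0, π). Suppose there exist four nonzero complex numbers v₁, v₂, v₃, v₄, pairwise non-proportional over ℝ (i.e. v_i/v_j ∉ ℝ for all i ≠ j), such that for each i both v_i and e^{iα}·v_i are periodic directions for L. Then there exist rational numbers a, b ∈ ℚ with τ² + aτ + b = 0 (i.e. ℂ/L has complex multiplication). -/
noncomputable section

namespace ParallelogramCMAux

lemma coeffs_eq_zero (τ : ℂ) (hτ : τ.im ≠ 0) (x y : ℝ)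
    (h : (x:ℂ) * τ + (y:ℂ) = 0) : x = 0 ∧ y = 0 := by
  have him : x * τ.im = 0 := by
    have := congrArg Complex.im h
    simpa using this
  have hx : x = 0 := by
    rcases mul_eq_zero.mp him with h' | h'
    · exact h'
    · exact absurd h' hτ
  refine ⟨hx, ?_⟩
  rw [hx] at h
  have : (y:ℂ) = 0 := by simpa using h
  exact_mod_cast this

lemma prop_of_det (τ : ℂ) (a b a' b' : ℤ) (h : a * b' = a' * b)
    (hnz : (a':ℂ) * τ + (b':ℂ) ≠ 0) :
    ∃ c : ℝ, (a:ℂ) * τ + (b:ℂ) = (c:ℂ) * ((a':ℂ) * τ + (b':ℂ)) := by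
  by_cases ha : a' = 0
  · subst ha
    have hb' : b' ≠ 0 := by
      rintro rfl
      simp at hnz
    have haz : a = 0 := by
      have : a * b' = 0 := by rw [h]; ring
      rcases mul_eq_zero.mp this with h' | h'
      · exact h'
      · exact absurd h' hb'
    subst haz
    refine ⟨(b:ℝ)/(b':ℝ), ?_⟩
    have hb'' : ((b':ℤ):ℂ) ≠ 0 := Int.cast_ne_zero.mpr hb'
    push_cast
    field_simp
    ring
  · refine ⟨(a:ℝ)/(a':ℝ), ?_⟩
    have ha'' : ((a':ℤ):ℂ) ≠ 0 := Int.cast_ne_zero.mpr ha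
    have hC : ((a:ℤ):ℂ) * ((b':ℤ):ℂ) = ((a':ℤ):ℂ) * ((b:ℤ):ℂ) := by
      exact_mod_cast congrArg (fun n : ℤ => (n:ℂ)) h
    push_cast
    field_simp
    linear_combination (-1:ℂ) * hC

lemma ratio_real (vi vj l l' : ℂ) (r r' y : ℝ) (hr' : r' ≠ 0) (hl' : l' ≠ 0)
    (hvi : vi = (r:ℂ) * l) (hvj : vj = (r':ℂ) * l') (hll : l = (y:ℂ) * l') :
    vi / vj = ((r * y / r' : ℝ) : ℂ) := by
  subst hvi hvj hll
  have hr'' : ((r':ℝ):ℂ) ≠ 0 := Complex.ofReal_ne_zero.mpr hr'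
  push_cast
  field_simp

lemma m_ne_aux (τ : ℂ) (E : ℂ) (hEim : E.im ≠ 0)
    (a b c d : ℤ) (t : ℝ) (ht : t ≠ 0)
    (hl : (a:ℂ)*τ + (b:ℂ) ≠ 0)
    (key : (c:ℂ)*τ + (d:ℂ) = (t:ℂ) * E * ((a:ℂ)*τ + (b:ℂ))) :
    a*d - b*c ≠ 0 := by
  intro h0
  have h : c * b = a * d := by linarith [h0]
  obtain ⟨x, hx⟩ := prop_of_det τ c d a b h hl
  rw [hx] at key
  have hcan : (x:ℂ) = (t:ℂ) * E := mul_right_cancel₀ hl key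
  have := congrArg Complex.im hcan
  simp [Complex.mul_im] at this
  rcases this with h' | h'
  · exact ht h'
  · exact hEim h'

lemma det_ne_aux (τ : ℂ) (E : ℂ) (hE0 : E ≠ 0)
    (a b c d a' b' c' d' : ℤ) (t t' : ℝ) (r r' : ℝ) (ht : t ≠ 0) (ht' : t' ≠ 0)
    (hr' : r' ≠ 0) (vi vj : ℂ)
    (hl' : (a':ℂ)*τ + (b':ℂ) ≠ 0)
    (hvi : vi = (r:ℂ) * ((a:ℂ)*τ+(b:ℂ))) (hvj : vj = (r':ℂ) * ((a':ℂ)*τ+(b':ℂ)))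
    (key : ((c:ℂ)*τ+(d:ℂ)) = (t:ℂ)*E*((a:ℂ)*τ+(b:ℂ)))
    (key' : ((c':ℂ)*τ+(d':ℂ)) = (t':ℂ)*E*((a':ℂ)*τ+(b':ℂ)))
    (hnp : ¬ ∃ x : ℝ, vi / vj = (x:ℂ)) :
    a*b' - a'*b ≠ 0 ∧ c*d' - c'*d ≠ 0 := by
  constructor
  · intro h0
    obtain ⟨x, hx⟩ := prop_of_det τ a b a' b' (by linarith) hl'
    exact hnp ⟨r*x/r', ratio_real vi vj _ _ r r' x hr' hl' hvi hvj hx⟩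
  · intro h0
    have hm' : (c':ℂ)*τ+(d':ℂ) ≠ 0 := by
      rw [key']
      exact mul_ne_zero (mul_ne_zero (Complex.ofReal_ne_zero.mpr ht') hE0) hl'
    obtain ⟨x, hx⟩ := prop_of_det τ c d c' d' (by linarith) hm'
    have htC : ((t:ℝ):ℂ) ≠ 0 := Complex.ofReal_ne_zero.mpr ht
    have hleq : (a:ℂ)*τ+(b:ℂ) = ((x*t'/t : ℝ):ℂ) * ((a':ℂ)*τ+(b':ℂ)) := by
      apply mul_left_cancel₀ (mul_ne_zero htC hE0)
      rw [← key, hx, key']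
      push_cast
      field_simp
    exact hnp ⟨r*(x*t'/t)/r', ratio_real vi vj _ _ r r' _ hr' hl' hvi hvj hleq⟩

end ParallelogramCMAux

/-- The lattice `L = ℤτ + ℤ ⊂ ℂ`. -/
def latticeL (τ : ℂ) : Set ℂ := {z | ∃ a b : ℤ, z = a * τ + b}

/-- `v` is a periodic direction for the parallelogram billiard associated to the lattice
`L = ℤτ + ℤ`: `v = r·λ` for some nonzero real `r` and nonzero `λ ∈ L`. -/
def IsPeriodicDir (τ : ℂ) (v : ℂ) : Prop :=
  ∃ r : ℝ, r ≠ 0 ∧ ∃ lam ∈ latticeL τ, lam ≠ 0 ∧ v = (r : ℂ) * lam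

/-- If there are four pairwise non-ℝ-proportional nonzero directions `vᵢ` such that both
`vᵢ` and `e^{iα}·vᵢ` are periodic directions for `L = ℤτ + ℤ`, then `ℂ/L` has complex
multiplication, i.e. `τ` is quadratic over `ℚ`. -/
theorem parallelogram_CM (τ : ℂ) (hτ : 0 < τ.im) (α : ℝ) (hα : α ∈ Set.Ioo 0 Real.pi)
    (v : Fin 4 → ℂ) (hv0 : ∀ i, v i ≠ 0)
    (hnp : ∀ i j : Fin 4, i ≠ j → ¬ ∃ r : ℝ, v i / v j = (r : ℂ))
    (hper : ∀ i, IsPeriodicDir τ (v i) ∧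
      IsPeriodicDir τ (Complex.exp (α * Complex.I) * v i)) :
    ∃ a b : ℚ, τ ^ 2 + (a : ℂ) * τ + (b : ℂ) = 0 := by
  have hτim : τ.im ≠ 0 := ne_of_gt hτ
  set E : ℂ := Complex.exp ((α:ℂ) * Complex.I) with hEdef
  have hE0 : E ≠ 0 := Complex.exp_ne_zero _
  have hEim : E.im ≠ 0 := by
    rw [hEdef]
    have : (Complex.exp ((α:ℂ) * Complex.I)).im = Real.sin α := by
      simp [Complex.exp_mul_I, ← Complex.ofReal_sin, ← Complex.ofReal_cos]
    rw [this]
    exact ne_of_gt (Real.sin_pos_of_pos_of_lt_pi hα.1 hα.2)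
  -- extract data
  have extract : ∀ i : Fin 4, ∃ a b c d : ℤ, ∃ r t : ℝ, r ≠ 0 ∧ t ≠ 0 ∧
      ((a:ℂ)*τ + (b:ℂ) ≠ 0) ∧ v i = (r:ℂ) * ((a:ℂ)*τ + (b:ℂ)) ∧
      ((c:ℂ)*τ + (d:ℂ)) = (t:ℂ) * E * ((a:ℂ)*τ + (b:ℂ)) := by
    intro i
    obtain ⟨⟨r, hr, lam, hmem, hlam, hveq⟩, ⟨s, hs, mu, hmem', hmu, hEveq⟩⟩ := hper i
    rw [latticeL, Set.mem_setOf_eq] at hmem hmem'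
    obtain ⟨a, b, rfl⟩ := hmem
    obtain ⟨c, d, rfl⟩ := hmem'
    refine ⟨a, b, c, d, r, r/s, hr, div_ne_zero hr hs, hlam, hveq, ?_⟩
    have hsC : ((s:ℝ):ℂ) ≠ 0 := Complex.ofReal_ne_zero.mpr hs
    apply mul_left_cancel₀ hsC
    rw [← hEveq, hveq]
    push_cast
    field_simp
  obtain ⟨a0, b0, c0, d0, r0, t0, hr0, ht0, hl0, hv0eq, key0⟩ := extract 0
  obtain ⟨a1, b1, c1, d1, r1, t1, hr1, ht1, hl1, hv1eq, key1⟩ := extract 1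
  obtain ⟨a2, b2, c2, d2, r2, t2, hr2, ht2, hl2, hv2eq, key2⟩ := extract 2
  -- determinant facts
  obtain ⟨hq3, hq3'⟩ := ParallelogramCMAux.det_ne_aux τ E hE0 a0 b0 c0 d0 a1 b1 c1 d1 t0 t1 r0 r1 ht0 ht1
    hr1 (v 0) (v 1) hl1 hv0eq hv1eq key0 key1 (hnp 0 1 (by decide))
  obtain ⟨hq1, hq1'⟩ := ParallelogramCMAux.det_ne_aux τ E hE0 a2 b2 c2 d2 a1 b1 c1 d1 t2 t1 r2 r1 ht2 ht1
    hr1 (v 2) (v 1) hl1 hv2eq hv1eq key2 key1 (hnp 2 1 (by decide))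
  obtain ⟨hq2, hq2'⟩ := ParallelogramCMAux.det_ne_aux τ E hE0 a0 b0 c0 d0 a2 b2 c2 d2 t0 t2 r0 r2 ht0 ht2
    hr2 (v 0) (v 2) hl2 hv0eq hv2eq key0 key2 (hnp 0 2 (by decide))
  have hm0 : a0*d0 - b0*c0 ≠ 0 := ParallelogramCMAux.m_ne_aux τ E hEim a0 b0 c0 d0 t0 ht0 hl0 key0
  -- linear relations among lattice vectors
  have s2 : ((a0:ℂ) * (b1:ℂ) - (a1:ℂ) * (b0:ℂ)) * ((a2:ℂ)*τ + (b2:ℂ)) = ((a2:ℂ) * (b1:ℂ) - (a1:ℂ) * (b2:ℂ)) * ((a0:ℂ)*τ + (b0:ℂ)) + ((a0:ℂ) * (b2:ℂ) - (a2:ℂ) * (b0:ℂ)) * ((a1:ℂ)*τ + (b1:ℂ)) := by ring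
  have s1 : ((c0:ℂ) * (d1:ℂ) - (c1:ℂ) * (d0:ℂ)) * ((c2:ℂ)*τ + (d2:ℂ)) = ((c2:ℂ) * (d1:ℂ) - (c1:ℂ) * (d2:ℂ)) * ((c0:ℂ)*τ + (d0:ℂ)) + ((c0:ℂ) * (d2:ℂ) - (c2:ℂ) * (d0:ℂ)) * ((c1:ℂ)*τ + (d1:ℂ)) := by ring
  have step : ((a0:ℂ) * (b1:ℂ) - (a1:ℂ) * (b0:ℂ)) * (((c2:ℂ) * (d1:ℂ) - (c1:ℂ) * (d2:ℂ)) * ((c0:ℂ)*τ + (d0:ℂ)) + ((c0:ℂ) * (d2:ℂ) - (c2:ℂ) * (d0:ℂ)) * ((c1:ℂ)*τ + (d1:ℂ)))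
      = ((c0:ℂ) * (d1:ℂ) - (c1:ℂ) * (d0:ℂ)) * ((t2:ℝ):ℂ) * E * (((a2:ℂ) * (b1:ℂ) - (a1:ℂ) * (b2:ℂ)) * ((a0:ℂ)*τ + (b0:ℂ)) + ((a0:ℂ) * (b2:ℂ) - (a2:ℂ) * (b0:ℂ)) * ((a1:ℂ)*τ + (b1:ℂ))) := by
    rw [← s1, ← s2, key2]
    ring
  rw [key0, key1] at step
  have hbig : E * ((((t2 * ((a2:ℝ) * (b1:ℝ) - (a1:ℝ) * (b2:ℝ)) * ((c0:ℝ) * (d1:ℝ) - (c1:ℝ) * (d0:ℝ)) - ((c2:ℝ) * (d1:ℝ) - (c1:ℝ) * (d2:ℝ)) * t0 * ((a0:ℝ) * (b1:ℝ) - (a1:ℝ) * (b0:ℝ))) : ℝ):ℂ) * ((a0:ℂ)*τ + (b0:ℂ)) + (((t2 * ((a0:ℝ) * (b2:ℝ) - (a2:ℝ) * (b0:ℝ)) * ((c0:ℝ) * (d1:ℝ) - (c1:ℝ) * (d0:ℝ)) - ((c0:ℝ) * (d2:ℝ) - (c2:ℝ) * (d0:ℝ)) * t1 * ((a0:ℝ)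 * (b1:ℝ) - (a1:ℝ) * (b0:ℝ))) : ℝ):ℂ) * ((a1:ℂ)*τ + (b1:ℂ))) = E * 0 := by
    push_cast at step ⊢
    linear_combination (-1:ℂ) * step
  have hXY := mul_left_cancel₀ hE0 hbig
  have hco : ((((t2 * ((a2:ℝ) * (b1:ℝ) - (a1:ℝ) * (b2:ℝ)) * ((c0:ℝ) * (d1:ℝ) - (c1:ℝ) * (d0:ℝ)) - ((c2:ℝ) * (d1:ℝ) - (c1:ℝ) * (d2:ℝ)) * t0 * ((a0:ℝ) * (b1:ℝ) - (a1:ℝ) * (b0:ℝ))) * (a0:ℝ) + (t2 * ((a0:ℝ) * (b2:ℝ) - (a2:ℝ) * (b0:ℝ)) * ((c0:ℝ) * (d1:ℝ) - (c1:ℝ) * (d0:ℝ)) - ((c0:ℝ) * (d2:ℝ) - (c2:ℝ) * (d0:ℝ)) * t1 * ((a0:ℝ) * (b1:ℝ) - (a1:ℝ) * (b0:ℝ))) * (a1:ℝ)) : ℝ):ℂ) * τ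
      + ((((t2 * ((a2:ℝ) * (b1:ℝ) - (a1:ℝ) * (b2:ℝ)) * ((c0:ℝ) * (d1:ℝ) - (c1:ℝ) * (d0:ℝ)) - ((c2:ℝ) * (d1:ℝ) - (c1:ℝ) * (d2:ℝ)) * t0 * ((a0:ℝ) * (b1:ℝ) - (a1:ℝ) * (b0:ℝ))) * (b0:ℝ) + (t2 * ((a0:ℝ) * (b2:ℝ) - (a2:ℝ) * (b0:ℝ)) * ((c0:ℝ) * (d1:ℝ) - (c1:ℝ) * (d0:ℝ)) - ((c0:ℝ) * (d2:ℝ) - (c2:ℝ) * (d0:ℝ)) * t1 * ((a0:ℝ) * (b1:ℝ) - (a1:ℝ) * (b0:ℝ))) * (b1:ℝ)) : ℝ):ℂ) = 0 := by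
    push_cast at hXY ⊢
    linear_combination hXY
  obtain ⟨hca, hcb⟩ := ParallelogramCMAux.coeffs_eq_zero τ hτim _ _ hco
  have hq3R : ((a0:ℝ) * (b1:ℝ) - (a1:ℝ) * (b0:ℝ)) ≠ 0 := by
    have := (Int.cast_ne_zero (α := ℝ)).mpr hq3
    push_cast at this
    convert this using 2
  have hX0 : (t2 * ((a2:ℝ) * (b1:ℝ) - (a1:ℝ) * (b2:ℝ)) * ((c0:ℝ) * (d1:ℝ) - (c1:ℝ) * (d0:ℝ)) - ((c2:ℝ) * (d1:ℝ) - (c1:ℝ) * (d2:ℝ)) * t0 * ((a0:ℝ) * (b1:ℝ) - (a1:ℝ) * (b0:ℝ))) = 0 := by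
    have h5 : (t2 * ((a2:ℝ) * (b1:ℝ) - (a1:ℝ) * (b2:ℝ)) * ((c0:ℝ) * (d1:ℝ) - (c1:ℝ) * (d0:ℝ)) - ((c2:ℝ) * (d1:ℝ) - (c1:ℝ) * (d2:ℝ)) * t0 * ((a0:ℝ) * (b1:ℝ) - (a1:ℝ) * (b0:ℝ))) * ((a0:ℝ) * (b1:ℝ) - (a1:ℝ) * (b0:ℝ)) = 0 := by
      linear_combination (b1:ℝ) * hca - (a1:ℝ) * hcb
    rcases mul_eq_zero.mp h5 with h | h
    · exact h
    · exact absurd h hq3R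
  have hY0 : (t2 * ((a0:ℝ) * (b2:ℝ) - (a2:ℝ) * (b0:ℝ)) * ((c0:ℝ) * (d1:ℝ) - (c1:ℝ) * (d0:ℝ)) - ((c0:ℝ) * (d2:ℝ) - (c2:ℝ) * (d0:ℝ)) * t1 * ((a0:ℝ) * (b1:ℝ) - (a1:ℝ) * (b0:ℝ))) = 0 := by
    have h5 : (t2 * ((a0:ℝ) * (b2:ℝ) - (a2:ℝ) * (b0:ℝ)) * ((c0:ℝ) * (d1:ℝ) - (c1:ℝ) * (d0:ℝ)) - ((c0:ℝ) * (d2:ℝ) - (c2:ℝ) * (d0:ℝ)) * t1 * ((a0:ℝ) * (b1:ℝ) - (a1:ℝ) * (b0:ℝ))) * ((a0:ℝ) * (b1:ℝ) - (a1:ℝ) * (b0:ℝ)) = 0 := by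
      linear_combination (a0:ℝ) * hcb - (b0:ℝ) * hca
    rcases mul_eq_zero.mp h5 with h | h
    · exact h
    · exact absurd h hq3R
  have hT0 : t0 * ((c2:ℝ) * (d1:ℝ) - (c1:ℝ) * (d2:ℝ)) * ((a0:ℝ) * (b2:ℝ) - (a2:ℝ) * (b0:ℝ)) = ((a2:ℝ) * (b1:ℝ) - (a1:ℝ) * (b2:ℝ)) * ((c0:ℝ) * (d2:ℝ) - (c2:ℝ) * (d0:ℝ)) * t1 := by
    have h6 : (t0 * ((c2:ℝ) * (d1:ℝ) - (c1:ℝ) * (d2:ℝ)) * ((a0:ℝ) * (b2:ℝ) - (a2:ℝ) * (b0:ℝ)) - ((a2:ℝ) * (b1:ℝ) - (a1:ℝ) * (b2:ℝ)) * ((c0:ℝ) * (d2:ℝ) - (c2:ℝ) * (d0:ℝ)) * t1) * ((a0:ℝ) * (b1:ℝ) - (a1:ℝ) * (b0:ℝ)) = 0 := by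
      linear_combination ((a2:ℝ) * (b1:ℝ) - (a1:ℝ) * (b2:ℝ)) * hY0 - ((a0:ℝ) * (b2:ℝ) - (a2:ℝ) * (b0:ℝ)) * hX0
    rcases mul_eq_zero.mp h6 with h | h
    · linarith
    · exact absurd h hq3R
  have hq1'R : ((c2:ℝ) * (d1:ℝ) - (c1:ℝ) * (d2:ℝ)) ≠ 0 := by
    have := (Int.cast_ne_zero (α := ℝ)).mpr hq1'
    push_cast at this
    convert this using 2
  have hq2R : ((a0:ℝ) * (b2:ℝ) - (a2:ℝ) * (b0:ℝ)) ≠ 0 := by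
    have := (Int.cast_ne_zero (α := ℝ)).mpr hq2
    push_cast at this
    convert this using 2
  obtain ⟨ρ, hρR⟩ : ∃ ρ : ℚ, t0 = (ρ:ℝ) * t1 := by
    refine ⟨((a2:ℚ) * (b1:ℚ) - (a1:ℚ) * (b2:ℚ)) * ((c0:ℚ) * (d2:ℚ) - (c2:ℚ) * (d0:ℚ)) / (((c2:ℚ) * (d1:ℚ) - (c1:ℚ) * (d2:ℚ)) * ((a0:ℚ) * (b2:ℚ) - (a2:ℚ) * (b0:ℚ))), ?_⟩
    push_cast
    rw [div_mul_eq_mul_div, eq_div_iff (by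
      push_cast
      exact mul_ne_zero hq1'R hq2R)]
    push_cast
    linear_combination hT0
  have hρC : ((t0:ℝ):ℂ) = ((ρ:ℚ):ℂ) * ((t1:ℝ):ℂ) := by
    exact_mod_cast congrArg Complex.ofReal hρR
  have hkeyQ : ((c0:ℂ)*τ + (d0:ℂ)) * ((a1:ℂ)*τ + (b1:ℂ)) = ((ρ:ℚ):ℂ) * (((a0:ℂ)*τ + (b0:ℂ)) * ((c1:ℂ)*τ + (d1:ℂ))) := by
    linear_combination ((a1:ℂ)*τ + (b1:ℂ)) * key0 - ((ρ:ℚ):ℂ) * ((a0:ℂ)*τ + (b0:ℂ)) * key1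
      + E * ((a0:ℂ)*τ + (b0:ℂ)) * ((a1:ℂ)*τ + (b1:ℂ)) * hρC
  have hquad : (((((c0:ℚ) * (a1:ℚ) - ρ * ((a0:ℚ) * (c1:ℚ)))) : ℚ):ℂ) * τ^2
      + (((((c0:ℚ) * (b1:ℚ) + (d0:ℚ) * (a1:ℚ) - ρ * ((a0:ℚ) * (d1:ℚ) + (b0:ℚ) * (c1:ℚ)))) : ℚ):ℂ) * τ
      + (((((d0:ℚ) * (b1:ℚ) - ρ * ((b0:ℚ) * (d1:ℚ)))) : ℚ):ℂ) = 0 := by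
    push_cast
    linear_combination hkeyQ
  by_cases hA : ((c0:ℚ) * (a1:ℚ) - ρ * ((a0:ℚ) * (c1:ℚ))) = 0
  · exfalso
    have hAC : (((((c0:ℚ) * (a1:ℚ) - ρ * ((a0:ℚ) * (c1:ℚ)))) : ℚ):ℂ) = 0 := by rw [hA]; simp
    have hquad' : (((((c0:ℚ) * (b1:ℚ) + (d0:ℚ) * (a1:ℚ) - ρ * ((a0:ℚ) * (d1:ℚ) + (b0:ℚ) * (c1:ℚ)))) : ℚ):ℂ) * τ + (((((d0:ℚ) * (b1:ℚ) - ρ * ((b0:ℚ) * (d1:ℚ)))) : ℚ):ℂ) = 0 := by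
      rw [hAC] at hquad
      linear_combination hquad
    have hBim : (((((c0:ℚ) * (b1:ℚ) + (d0:ℚ) * (a1:ℚ) - ρ * ((a0:ℚ) * (d1:ℚ) + (b0:ℚ) * (c1:ℚ)))) : ℚ):ℝ) * τ.im = 0 := by
      simpa using congrArg Complex.im hquad'
    have hB : ((c0:ℚ) * (b1:ℚ) + (d0:ℚ) * (a1:ℚ) - ρ * ((a0:ℚ) * (d1:ℚ) + (b0:ℚ) * (c1:ℚ))) = 0 := by
      rcases mul_eq_zero.mp hBim with h | h
      · exact_mod_cast h
      · exact absurd h hτim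
    have hC : ((d0:ℚ) * (b1:ℚ) - ρ * ((b0:ℚ) * (d1:ℚ))) = 0 := by
      have h8 : (((((d0:ℚ) * (b1:ℚ) - ρ * ((b0:ℚ) * (d1:ℚ)))) : ℚ):ℂ) = 0 := by
        have hBC : (((((c0:ℚ) * (b1:ℚ) + (d0:ℚ) * (a1:ℚ) - ρ * ((a0:ℚ) * (d1:ℚ) + (b0:ℚ) * (c1:ℚ)))) : ℚ):ℂ) = 0 := by rw [hB]; simp
        rw [hBC] at hquad'
        linear_combination hquad'
      exact_mod_cast h8
    have hq3Q : ((a0:ℚ) * (b1:ℚ) - (a1:ℚ) * (b0:ℚ)) ≠ 0 := by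
      have := (Int.cast_ne_zero (α := ℚ)).mpr hq3
      push_cast at this
      convert this using 2
    have hm0Q : ((a0:ℚ) * (d0:ℚ) - (b0:ℚ) * (c0:ℚ)) ≠ 0 := by
      have := (Int.cast_ne_zero (α := ℚ)).mpr hm0
      push_cast at this
      convert this using 2
    have hz : ((d0:ℚ) * (a0:ℚ) - (c0:ℚ) * (b0:ℚ)) * ((b1:ℚ) * (a0:ℚ) - (a1:ℚ) * (b0:ℚ)) = 0 := by
      linear_combination ((b0:ℚ))^2 * hA - (a0:ℚ) * (b0:ℚ) * hB + ((a0:ℚ))^2 * hC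
    rcases mul_eq_zero.mp hz with h | h
    · exact hm0Q (by linear_combination h)
    · exact hq3Q (by linear_combination h)
  · refine ⟨(((c0:ℚ) * (b1:ℚ) + (d0:ℚ) * (a1:ℚ) - ρ * ((a0:ℚ) * (d1:ℚ) + (b0:ℚ) * (c1:ℚ)))) / (((c0:ℚ) * (a1:ℚ) - ρ * ((a0:ℚ) * (c1:ℚ)))), (((d0:ℚ) * (b1:ℚ) - ρ * ((b0:ℚ) * (d1:ℚ)))) / (((c0:ℚ) * (a1:ℚ) - ρ * ((a0:ℚ) * (c1:ℚ)))), ?_⟩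
    have hAC' : ((c0:ℂ) * (a1:ℂ) - ((ρ:ℚ):ℂ) * ((a0:ℂ) * (c1:ℂ))) ≠ 0 := by
      have := (Rat.cast_ne_zero (α := ℂ)).mpr hA
      push_cast at this
      convert this using 2
    have hquadC := hquad
    push_cast at hquadC ⊢
    rw [add_assoc, div_mul_eq_mul_div, ← add_div, add_div' _ _ _ hAC', div_eq_zero_iff]
    left
    linear_combination hquadC
end
end

section
/- Let τ ∈ ℂ with Im τ > 0 and L = {aτ + b : a, b ∈ ℤ}, and suppose there exist rational numbers a, b ∈ ℚ with τ² + aτ + b = 0 (i.e. ℂ/L has complex multiplication). Then the set of angles α ∈ (0, π) with the following property is infinite: there exists an infinite set S of nonzero complex numbers, pairwise non-proportional over ℝ (v/w ∉ ℝ for distinct v, w ∈ S), such that for every v ∈ S both v and e^{iα}·v are periodic directions for L. -/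
noncomputable section

/-- If `ℂ/L` has complex multiplication, then for infinitely many angles `α ∈ (0, π)`
there is an infinite set of pairwise non-ℝ-proportional nonzero directions `v` such that
both `v` and `e^{iα}·v` are periodic directions for `L = ℤτ + ℤ`. -/
theorem parallelogram_CM_converse (τ : ℂ) (hτ : 0 < τ.im)
    (hCM : ∃ a b : ℚ, τ ^ 2 + (a : ℂ) * τ + (b : ℂ) = 0) :
    {α : ℝ | α ∈ Set.Ioo 0 Real.pi ∧
      ∃ S : Set ℂ, S.Infinite ∧ (∀ v ∈ S, v ≠ 0) ∧
        (∀ v ∈ S, ∀ w ∈ S, v ≠ w → ¬ ∃ r : ℝ, v / w = (r : ℂ)) ∧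
        (∀ v ∈ S, IsPeriodicDir τ v ∧
          IsPeriodicDir τ (Complex.exp (α * Complex.I) * v))}.Infinite := by
  obtain ⟨a, b, hab⟩ := hCM
  obtain ⟨N, A, B, hNpos, hτ2⟩ :
      ∃ N A B : ℤ, 0 < N ∧ (N : ℂ) * τ ^ 2 = -(A : ℂ) * τ - (B : ℂ) := by
    refine ⟨(a.den : ℤ) * (b.den : ℤ), a.num * (b.den : ℤ), b.num * (a.den : ℤ), ?_, ?_⟩
    · exact mul_pos (by exact_mod_cast a.pos) (by exact_mod_cast b.pos)
    · have hadden : ((a.den : ℂ)) ≠ 0 := by exact_mod_cast a.den_nz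
      have hbdden : ((b.den : ℂ)) ≠ 0 := by exact_mod_cast b.den_nz
      have hNa : (((a.den : ℤ) * (b.den : ℤ) : ℤ) : ℂ) * (a : ℂ)
          = ((a.num * (b.den : ℤ) : ℤ) : ℂ) := by
        rw [Rat.cast_def]
        push_cast
        field_simp
      have hNb : (((a.den : ℤ) * (b.den : ℤ) : ℤ) : ℂ) * (b : ℂ)
          = ((b.num * (a.den : ℤ) : ℤ) : ℂ) := by
        rw [Rat.cast_def]
        push_cast
        field_simp
      linear_combination (((a.den : ℤ) * (b.den : ℤ) : ℤ) : ℂ) * hab - τ * hNa - hNb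
  -- γ n = Nτ + n
  set γ : ℕ → ℂ := fun n => (N : ℂ) * τ + (n : ℂ) with hγdef
  have hγim : ∀ n, (γ n).im = (N : ℝ) * τ.im := by
    intro n; simp [hγdef, Complex.add_im, Complex.mul_im]
  have hγimpos : ∀ n, 0 < (γ n).im := by
    intro n; rw [hγim]
    have : (0:ℝ) < (N:ℝ) := by exact_mod_cast hNpos
    positivity
  have hγne : ∀ n, γ n ≠ 0 := by
    intro n h
    have := hγimpos n
    rw [h] at this; simp at this
  -- γ multiplies the lattice into itself
  have hmul : ∀ n : ℕ, ∀ z ∈ latticeL τ, γ n * z ∈ latticeL τ := by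
    rintro n z ⟨p, q, rfl⟩
    refine ⟨(n : ℤ) * p + N * q - A * p, (n : ℤ) * q - B * p, ?_⟩
    have : γ n * ((p : ℂ) * τ + (q : ℂ))
        = (p : ℂ) * ((N : ℂ) * τ ^ 2) + ((N:ℂ) * q + (n:ℂ) * p) * τ + (n:ℂ) * q := by
      rw [hγdef]; ring
    rw [this, hτ2]
    push_cast
    ring
  -- the family of directions
  set S : Set ℂ := Set.range (fun m : ℕ => τ + (m : ℂ)) with hSdef
  have hSmem : ∀ m : ℕ, τ + (m : ℂ) ∈ latticeL τ := fun m => ⟨1, (m : ℤ), by push_cast; ring⟩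
  have hSim : ∀ m : ℕ, (τ + (m : ℂ)).im = τ.im := by intro m; simp
  have hSne : ∀ m : ℕ, τ + (m : ℂ) ≠ 0 := by
    intro m h
    have : (τ + (m:ℂ)).im = 0 := by rw [h]; simp
    rw [hSim] at this; exact hτ.ne' this
  have hSinf : S.Infinite := by
    apply Set.infinite_range_of_injective
    intro m₁ m₂ h
    simpa using h
  -- properties of S
  have hSprop : ∀ v ∈ S, ∀ w ∈ S, v ≠ w → ¬ ∃ r : ℝ, v / w = (r : ℂ) := by
    rintro v ⟨m₁, rfl⟩ w ⟨m₂, rfl⟩ hvw ⟨r, hr⟩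
    simp only at hr hvw ⊢
    have hw : τ + (m₂ : ℂ) ≠ 0 := hSne m₂
    have h2 : τ + (m₁ : ℂ) = (r : ℂ) * (τ + (m₂ : ℂ)) := by
      rw [div_eq_iff hw] at hr; exact hr
    have him : τ.im = r * τ.im := by
      have := congrArg Complex.im h2
      simpa [Complex.mul_im] using this
    have hr1 : r = 1 := by
      have h0 : (r - 1) * τ.im = 0 := by linear_combination -him
      rcases mul_eq_zero.mp h0 with h' | h'
      · linarith
      · exact absurd h' hτ.ne'
    rw [hr1, Complex.ofReal_one, one_mul] at h2
    exact hvw h2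
  -- each α n works
  have hkey : ∀ n : ℕ, Complex.arg (γ n) ∈
      {α : ℝ | α ∈ Set.Ioo 0 Real.pi ∧
      ∃ S : Set ℂ, S.Infinite ∧ (∀ v ∈ S, v ≠ 0) ∧
        (∀ v ∈ S, ∀ w ∈ S, v ≠ w → ¬ ∃ r : ℝ, v / w = (r : ℂ)) ∧
        (∀ v ∈ S, IsPeriodicDir τ v ∧
          IsPeriodicDir τ (Complex.exp (α * Complex.I) * v))} := by
    intro n
    have habs : (0 : ℝ) < ‖γ n‖ := by
      simpa [norm_pos_iff] using hγne n
    have habsC : ((‖γ n‖ : ℝ) : ℂ) ≠ 0 := by exact_mod_cast habs.ne'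
    have hexp : Complex.exp ((Complex.arg (γ n) : ℂ) * Complex.I)
        = γ n / (‖γ n‖ : ℂ) := by
      rw [eq_div_iff habsC, mul_comm]
      exact Complex.norm_mul_exp_arg_mul_I (γ n)
    constructor
    · constructor
      · rcases lt_or_eq_of_le (Complex.arg_nonneg_iff.mpr (hγimpos n).le) with h | h
        · exact h
        · exfalso
          have := Complex.arg_eq_zero_iff.mp h.symm
          exact (hγimpos n).ne' this.2
      · exact Complex.arg_lt_pi_iff.mpr (Or.inr (hγimpos n).ne')
    · refine ⟨S, hSinf, ?_, hSprop, ?_⟩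
      · rintro v ⟨m, rfl⟩; exact hSne m
      · rintro v ⟨m, rfl⟩
        constructor
        · exact ⟨1, one_ne_zero, τ + (m : ℂ), hSmem m, hSne m, by simp⟩
        · refine ⟨(‖γ n‖)⁻¹, inv_ne_zero habs.ne', γ n * (τ + (m : ℂ)),
            hmul n _ (hSmem m), mul_ne_zero (hγne n) (hSne m), ?_⟩
          rw [hexp]
          push_cast
          field_simp
  -- injectivity of n ↦ arg (γ n)
  have hinj : Function.Injective (fun n : ℕ => Complex.arg (γ n)) := by
    intro n₁ n₂ h
    simp only at h
    have h1 := Complex.norm_mul_exp_arg_mul_I (γ n₁)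
    have h2 := Complex.norm_mul_exp_arg_mul_I (γ n₂)
    rw [h] at h1
    have habs1 : (0 : ℝ) < ‖γ n₁‖ := by
      simpa [norm_pos_iff] using hγne n₁
    have habs2 : (0 : ℝ) < ‖γ n₂‖ := by
      simpa [norm_pos_iff] using hγne n₂
    set e : ℂ := Complex.exp ((Complex.arg (γ n₂) : ℂ) * Complex.I) with he
    set c₁ : ℝ := ‖γ n₁‖ with hc₁
    set c₂ : ℝ := ‖γ n₂‖ with hc₂
    have hq : (c₂ : ℂ) * γ n₁ = (c₁ : ℂ) * γ n₂ := by
      rw [← h1, ← h2]; ring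
    have him := congrArg Complex.im hq
    simp only [Complex.mul_im, Complex.ofReal_re, Complex.ofReal_im, zero_mul, add_zero,
      hγim n₁, hγim n₂] at him
    have hNim : (0:ℝ) < (N:ℝ) * τ.im := by
      have : (0:ℝ) < (N:ℝ) := by exact_mod_cast hNpos
      positivity
    have habseq : c₂ = c₁ := mul_right_cancel₀ hNim.ne' him
    have h1C : ((c₁ : ℝ) : ℂ) ≠ 0 := by exact_mod_cast habs1.ne'
    rw [habseq] at hq
    have hγeq : γ n₁ = γ n₂ := mul_left_cancel₀ h1C hq
    have : (n₁ : ℂ) = (n₂ : ℂ) := by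
      simp only [hγdef] at hγeq
      exact add_left_cancel hγeq
    exact_mod_cast this
  exact Set.infinite_of_injective_forall_mem hinj hkey
end
end

section
/- In ℙ²(ℂ) with homogeneous coordinates (x : y : z), let L₁ = {y = z}, L₂ = {x + y = 0}, L₃ = {x + y + z = 0}, and let β be the automorphism of ℙ²(ℂ) induced by the matrix with rows (1,1,0), (0,1,0), (0,0,2). For every natural number n, setting m = 2ⁿ + n, the point P = (−m−1 : 1 : 1) satisfies: P ∈ L₁, β^m(P) ∈ L₂, and β^n(P) ∈ L₃. Consequently, the set of points of L₁ whose β-orbit intersects both L₂ and L₃ is infinite. -/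
noncomputable section

open Projectivization

/-- The projective plane `ℙ²(ℂ)`. -/
abbrev ProjPlane := Projectivization ℂ (Fin 3 → ℂ)

/-- The automorphism of `ℙ²(ℂ)` induced by a linear automorphism `g` of `ℂ³`. -/
def projAct (g : (Fin 3 → ℂ) ≃ₗ[ℂ] (Fin 3 → ℂ)) (x : ProjPlane) : ProjPlane :=
  Projectivization.map g.toLinearMap g.injective x

/-- The point lies on the line cut out by the linear form `f`. -/
def OnLine (P : ProjPlane) (f : (Fin 3 → ℂ) →ₗ[ℂ] ℂ) : Prop :=
  P.submodule ≤ LinearMap.ker f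

/-- coordinate functionals -/
def coord (i : Fin 3) : (Fin 3 → ℂ) →ₗ[ℂ] ℂ := LinearMap.proj i

/-- The line `L₁ : y = z`. -/
def lineOne : (Fin 3 → ℂ) →ₗ[ℂ] ℂ := coord 1 - coord 2

/-- The line `L₂ : x + y = 0`. -/
def lineTwo : (Fin 3 → ℂ) →ₗ[ℂ] ℂ := coord 0 + coord 1

/-- The line `L₃ : x + y + z = 0`. -/
def lineThree : (Fin 3 → ℂ) →ₗ[ℂ] ℂ := coord 0 + coord 1 + coord 2

/-- The point `P = (−m−1 : 1 : 1)` where `m = 2ⁿ + n`. -/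
def pt (n : ℕ) : ProjPlane :=
  Projectivization.mk ℂ ![-((2 : ℂ) ^ n + (n : ℂ)) - 1, 1, 1] (by
    intro h
    have h1 := congrFun h 1
    simp at h1)

lemma onLine_mk (v : Fin 3 → ℂ) (h : v ≠ 0) (f : (Fin 3 → ℂ) →ₗ[ℂ] ℂ) :
    OnLine (Projectivization.mk ℂ v h) f ↔ f v = 0 := by
  unfold OnLine
  rw [Projectivization.submodule_mk, Submodule.span_singleton_le_iff_mem, LinearMap.mem_ker]

lemma projAct_mk (g : (Fin 3 → ℂ) ≃ₗ[ℂ] (Fin 3 → ℂ)) (v : Fin 3 → ℂ) (h : v ≠ 0) :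
    projAct g (Projectivization.mk ℂ v h) = Projectivization.mk ℂ (g v) (by simp [h]) := by
  unfold projAct
  rw [Projectivization.map_mk]
  rfl

lemma beta_apply (β : (Fin 3 → ℂ) ≃ₗ[ℂ] (Fin 3 → ℂ))
    (hβ : β.toLinearMap = Matrix.toLin' !![1, 1, 0; 0, 1, 0; 0, 0, 2]) (v : Fin 3 → ℂ) :
    β v = ![v 0 + v 1, v 1, 2 * v 2] := by
  have : β v = β.toLinearMap v := rfl
  rw [this, hβ]
  simp [Matrix.toLin'_apply, Matrix.mulVec, dotProduct]
  simp [Fin.sum_univ_three]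

lemma beta_pow_apply (β : (Fin 3 → ℂ) ≃ₗ[ℂ] (Fin 3 → ℂ))
    (hβ : β.toLinearMap = Matrix.toLin' !![1, 1, 0; 0, 1, 0; 0, 0, 2]) (N : ℕ) (v : Fin 3 → ℂ) :
    (β ^ N) v = ![v 0 + N * v 1, v 1, 2 ^ N * v 2] := by
  induction N with
  | zero => ext i; fin_cases i <;> simp
  | succ N ih =>
    have h1 : (β ^ (N + 1)) v = β ((β ^ N) v) := by
      rw [pow_succ']
      rfl
    rw [h1, ih, beta_apply β hβ]
    ext i
    fin_cases i <;> simp <;> push_cast <;> ring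

/-- In the example `L₁ : y = z`, `L₂ : x + y = 0`, `L₃ : x + y + z = 0`, with `β` induced
by the matrix with rows `(1,1,0), (0,1,0), (0,0,2)`, the point `P = (−m−1 : 1 : 1)`,
`m = 2ⁿ + n`, lies on `L₁`, `β^m(P)` lies on `L₂` and `β^n(P)` lies on `L₃`; consequently
infinitely many points of `L₁` have a `β`-orbit meeting both `L₂` and `L₃`. -/
theorem example_infinite_family (β : (Fin 3 → ℂ) ≃ₗ[ℂ] (Fin 3 → ℂ))
    (hβ : β.toLinearMap = Matrix.toLin' !![1, 1, 0; 0, 1, 0; 0, 0, 2]) :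
    (∀ n : ℕ,
      OnLine (pt n) lineOne ∧
      OnLine (projAct (β ^ (2 ^ n + n)) (pt n)) lineTwo ∧
      OnLine (projAct (β ^ n) (pt n)) lineThree) ∧
    {P : ProjPlane | OnLine P lineOne ∧
      (∃ m : ℤ, OnLine (projAct (β ^ m) P) lineTwo) ∧
      (∃ k : ℤ, OnLine (projAct (β ^ k) P) lineThree)}.Infinite := by
  have key : ∀ n : ℕ,
      OnLine (pt n) lineOne ∧
      OnLine (projAct (β ^ (2 ^ n + n)) (pt n)) lineTwo ∧
      OnLine (projAct (β ^ n) (pt n)) lineThree := by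
    intro n
    refine ⟨?_, ?_, ?_⟩
    · rw [pt, onLine_mk]
      simp [lineOne, coord]
    · rw [pt, projAct_mk, onLine_mk, beta_pow_apply β hβ]
      simp [lineTwo, coord]
      push_cast
      ring
    · rw [pt, projAct_mk, onLine_mk, beta_pow_apply β hβ]
      simp [lineThree, coord]
      ring
  refine ⟨key, ?_⟩
  apply Set.infinite_of_injective_forall_mem (f := pt)
  · intro a b hab
    rw [pt, pt, Projectivization.mk_eq_mk_iff] at hab
    obtain ⟨c, hc⟩ := hab
    have h1 := congrFun hc 1
    simp [Units.smul_def] at h1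
    have h0 := congrFun hc 0
    simp [Units.smul_def, h1] at h0
    have : ((2 : ℂ) ^ a + a) = (2 : ℂ) ^ b + b := by linear_combination h0
    have : ((2 ^ a + a : ℕ) : ℂ) = ((2 ^ b + b : ℕ) : ℂ) := by push_cast; exact this
    have h2 : 2 ^ a + a = 2 ^ b + b := Nat.cast_injective this
    have hmono : StrictMono (fun n : ℕ => 2 ^ n + n) :=
      StrictMono.add (fun x y hxy => Nat.pow_lt_pow_right one_lt_two hxy) strictMono_id
    exact hmono.injective h2
  · intro n
    obtain ⟨h1, h2, h3⟩ := key n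
    refine ⟨h1, ⟨(2 ^ n + n : ℕ), ?_⟩, ⟨(n : ℕ), ?_⟩⟩
    · rwa [zpow_natCast]
    · rwa [zpow_natCast]
end
end

section
/- For every real number u ≥ 1, one has ∫_u^∞ dx/(x·√(x−1)) = π − 2·arctan(√(u−1)), and the function λ ↦ ∫_u^∞ dx/√(x(x−1)(x−λ)) tends to π − 2·arctan(√(u−1)) as λ → 0⁺ (limit taken along λ ∈ (0,1)). -/
open MeasureTheory Real

/-- The integral `∫_u^∞ dx/(x√(x−1))` equals `π − 2 arctan √(u−1)`, and the elliptic
integral `I_u(λ) = ∫_u^∞ dx/√(x(x−1)(x−λ))` tends to this value as `λ → 0⁺` along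
`λ ∈ (0,1)`. -/
theorem elliptic_integral_limit (u : ℝ) (hu : 1 ≤ u) :
    (∫ x in Set.Ioi u, (x * Real.sqrt (x - 1))⁻¹) =
      Real.pi - 2 * Real.arctan (Real.sqrt (u - 1)) ∧
    Filter.Tendsto
      (fun lam : ℝ => ∫ x in Set.Ioi u, (Real.sqrt (x * (x - 1) * (x - lam)))⁻¹)
      (nhdsWithin 0 (Set.Ioo 0 1))
      (nhds (Real.pi - 2 * Real.arctan (Real.sqrt (u - 1)))) := by
  set g : ℝ → ℝ := fun x => 2 * Real.arctan (Real.sqrt (x - 1)) with hgdef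
  set f : ℝ → ℝ := fun x => (x * Real.sqrt (x - 1))⁻¹ with hfdef
  -- derivative of the antiderivative
  have hderiv : ∀ x ∈ Set.Ioi u, HasDerivAt g (f x) x := by
    intro x hx
    have hx1 : (1 : ℝ) < x := lt_of_le_of_lt hu hx
    have hx1' : (0 : ℝ) < x - 1 := by linarith
    have hs : HasDerivAt (fun y : ℝ => Real.sqrt (y - 1)) (1 / (2 * Real.sqrt (x - 1))) x := by
      have h := (Real.hasDerivAt_sqrt (ne_of_gt hx1')).comp x
        ((hasDerivAt_id x).sub_const 1)
      exact h.congr_deriv (by simp)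
    have ha := (Real.hasDerivAt_arctan (Real.sqrt (x - 1))).comp x hs
    have h2 := ha.const_mul 2
    refine h2.congr_deriv ?_
    have hsq : Real.sqrt (x - 1) ^ 2 = x - 1 := Real.sq_sqrt hx1'.le
    have hsp : 0 < Real.sqrt (x - 1) := Real.sqrt_pos.2 hx1'
    have hx0 : x ≠ 0 := by positivity
    rw [hfdef, hsq]
    field_simp
    ring
  have hcont : ContinuousWithinAt g (Set.Ici u) u := by
    exact (continuous_const.mul (Real.continuous_arctan.comp
      (Real.continuous_sqrt.comp (continuous_id.sub continuous_const)))).continuousWithinAt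
  have hpos : ∀ x ∈ Set.Ioi u, 0 ≤ f x := by
    intro x hx
    have hx1 : (1 : ℝ) < x := lt_of_le_of_lt hu hx
    have : 0 ≤ Real.sqrt (x - 1) := Real.sqrt_nonneg _
    positivity
  have htop : Filter.Tendsto g Filter.atTop (nhds Real.pi) := by
    have h1 : Filter.Tendsto (fun x : ℝ => x - 1) Filter.atTop Filter.atTop :=
      Filter.tendsto_atTop_add_const_right _ (-1) Filter.tendsto_id
    have h2 : Filter.Tendsto (fun x : ℝ => Real.sqrt (x - 1)) Filter.atTop Filter.atTop := by
      apply Filter.tendsto_atTop_atTop.2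
      intro b
      refine ⟨b ^ 2 + 2, fun x hx => ?_⟩
      calc b ≤ |b| := le_abs_self b
        _ = Real.sqrt (b ^ 2) := (Real.sqrt_sq_eq_abs b).symm
        _ ≤ Real.sqrt (x - 1) := Real.sqrt_le_sqrt (by linarith)
    have h3 : Filter.Tendsto (fun x : ℝ => Real.arctan (Real.sqrt (x - 1)))
        Filter.atTop (nhds (Real.pi / 2)) :=
      (Real.tendsto_arctan_atTop.mono_right nhdsWithin_le_nhds).comp h2
    have h4 := h3.const_mul 2
    simpa [hgdef, mul_div_cancel₀] using h4
  have part1 : (∫ x in Set.Ioi u, f x) = Real.pi - 2 * Real.arctan (Real.sqrt (u - 1)) :=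
    integral_Ioi_of_hasDerivAt_of_nonneg hcont hderiv hpos htop
  have hInt : IntegrableOn f (Set.Ioi u) :=
    integrableOn_Ioi_deriv_of_nonneg hcont hderiv hpos htop
  refine ⟨part1, ?_⟩
  -- dominated convergence
  have key : Filter.Tendsto
      (fun lam : ℝ => ∫ x in Set.Ioi u, (Real.sqrt (x * (x - 1) * (x - lam)))⁻¹)
      (nhdsWithin 0 (Set.Ioo 0 1)) (nhds (∫ x in Set.Ioi u, f x)) := by
    apply MeasureTheory.tendsto_integral_filter_of_dominated_convergence
      (bound := fun x => Real.sqrt 2 * f x)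
    · -- measurability
      refine Filter.Eventually.of_forall fun lam => ?_
      apply Measurable.aestronglyMeasurable
      fun_prop
    · -- bound
      have hev : ∀ᶠ lam in nhdsWithin (0 : ℝ) (Set.Ioo 0 1),
          lam ∈ Set.Ioo (0 : ℝ) 1 ∧ lam < 1 / 2 := by
        filter_upwards [self_mem_nhdsWithin,
          eventually_nhdsWithin_of_eventually_nhds
            (eventually_lt_nhds (by norm_num : (0 : ℝ) < 1 / 2))] with lam h1 h2
        exact ⟨h1, h2⟩
      filter_upwards [hev] with lam hlam
      filter_upwards [ae_restrict_mem measurableSet_Ioi] with x hx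
      have hx1 : (1 : ℝ) < x := lt_of_le_of_lt hu hx
      have hx0 : (0 : ℝ) < x := by linarith
      have hxm : (0 : ℝ) < x - 1 := by linarith
      have hxl : x / 2 ≤ x - lam := by
        have := hlam.2
        linarith
      have h1 : x ^ 2 * (x - 1) / 2 ≤ x * (x - 1) * (x - lam) := by
        have h := mul_le_mul_of_nonneg_left hxl (by positivity : (0:ℝ) ≤ x * (x - 1))
        nlinarith [h]
      have h2 : Real.sqrt (x ^ 2 * (x - 1) / 2) ≤ Real.sqrt (x * (x - 1) * (x - lam)) :=
        Real.sqrt_le_sqrt h1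
      have h3 : Real.sqrt (x ^ 2 * (x - 1) / 2) = x * Real.sqrt (x - 1) / Real.sqrt 2 := by
        rw [Real.sqrt_div' _ (by norm_num : (0:ℝ) ≤ 2), Real.sqrt_mul (by positivity), Real.sqrt_sq hx0.le]
      have hposd : 0 < x * Real.sqrt (x - 1) / Real.sqrt 2 := by
        have := Real.sqrt_pos.2 hxm
        positivity
      have h4 : (Real.sqrt (x * (x - 1) * (x - lam)))⁻¹ ≤
          (x * Real.sqrt (x - 1) / Real.sqrt 2)⁻¹ := by
        apply inv_anti₀ hposd
        rw [← h3]; exact h2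
      have h5 : (x * Real.sqrt (x - 1) / Real.sqrt 2)⁻¹ = Real.sqrt 2 * f x := by
        rw [hfdef]; rw [inv_div, div_eq_mul_inv]
      rw [Real.norm_eq_abs, abs_of_nonneg (by positivity)]
      rw [← h5]; exact h4
    · exact hInt.const_mul _
    · -- pointwise limit
      filter_upwards [ae_restrict_mem measurableSet_Ioi] with x hx
      have hx1 : (1 : ℝ) < x := lt_of_le_of_lt hu hx
      have hx0 : (0 : ℝ) < x := by linarith
      have hxm : (0 : ℝ) < x - 1 := by linarith
      have h0 : Filter.Tendsto (fun lam : ℝ => x * (x - 1) * (x - lam)) (nhds 0)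
          (nhds (x * (x - 1) * (x - 0))) :=
        ((tendsto_const_nhds.sub Filter.tendsto_id).const_mul _)
      have h1 : Filter.Tendsto (fun lam : ℝ => Real.sqrt (x * (x - 1) * (x - lam))) (nhds 0)
          (nhds (Real.sqrt (x * (x - 1) * (x - 0)))) :=
        (Real.continuous_sqrt.tendsto _).comp h0
      have hne : Real.sqrt (x * (x - 1) * (x - 0)) ≠ 0 := by
        rw [sub_zero]
        refine ne_of_gt (Real.sqrt_pos.2 ?_)
        positivity
      have h2 := h1.inv₀ hne
      have hval : (Real.sqrt (x * (x - 1) * (x - 0)))⁻¹ = f x := by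
        rw [sub_zero, hfdef]
        have : x * (x - 1) * x = x ^ 2 * (x - 1) := by ring
        rw [this, Real.sqrt_mul (by positivity), Real.sqrt_sq hx0.le]
      rw [hval] at h2
      exact h2.mono_left nhdsWithin_le_nhds
  rwa [part1] at key
end

section
/- For every real number u > 1, the function λ ↦ I_u(λ)/I₁(λ) = (∫_u^∞ dx/√(x(x−1)(x−λ))) / (∫_1^∞ dx/√(x(x−1)(x−λ))) is strictly decreasing on the interval (0, 1). -/
open MeasureTheory Set

namespace EllipticRatioAux

/-- The integrand. -/
noncomputable def f (lam x : ℝ) : ℝ := (Real.sqrt (x * (x - 1) * (x - lam)))⁻¹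

lemma f_meas (lam : ℝ) : Measurable (f lam) := by
  unfold f
  fun_prop

lemma f_nonneg (lam x : ℝ) : 0 ≤ f lam x := by
  unfold f; positivity

lemma f_pos {lam x : ℝ} (hl : lam < 1) (hx : 1 < x) : 0 < f lam x := by
  have h : 0 < x * (x - 1) * (x - lam) := by
    have := mul_pos (mul_pos (show (0:ℝ) < x by linarith)
      (show (0:ℝ) < x - 1 by linarith)) (show (0:ℝ) < x - lam by linarith)
    linarith
  unfold f
  exact inv_pos.2 (Real.sqrt_pos.2 h)

/-- Integrability on `(1, ∞)`. -/
lemma integrableOn_f {lam : ℝ} (hl : lam < 1) :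
    IntegrableOn (f lam) (Ioi 1) := by
  have hmeas2 : AEStronglyMeasurable (f lam) (volume.restrict (Ioc 1 2)) :=
    (f_meas lam).aestronglyMeasurable
  have hmeas3 : AEStronglyMeasurable (f lam) (volume.restrict (Ioi 2)) :=
    (f_meas lam).aestronglyMeasurable
  have part1 : IntegrableOn (f lam) (Ioc 1 2) := by
    have hbnd : IntegrableOn
        (fun x : ℝ => (Real.sqrt (1 - lam))⁻¹ * (x - 1) ^ (-(1/2) : ℝ)) (Ioc 1 2) := by
      have h0 : IntervalIntegrable (fun x : ℝ => x ^ (-(1/2) : ℝ)) volume 0 1 :=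
        intervalIntegral.intervalIntegrable_rpow' (by norm_num)
      have h1 : IntervalIntegrable (fun x : ℝ => (x - 1) ^ (-(1/2) : ℝ)) volume 1 2 := by
        have := h0.comp_sub_right 1
        norm_num at this
        exact this
      exact ((intervalIntegrable_iff_integrableOn_Ioc_of_le (by norm_num)).1 h1).const_mul _
    refine hbnd.mono' hmeas2 ?_
    refine (ae_restrict_iff' measurableSet_Ioc).2 (Filter.Eventually.of_forall fun x hx => ?_)
    obtain ⟨hx1, hx2⟩ := hx
    have h1l : 0 < 1 - lam := by linarith
    have hx1' : 0 < x - 1 := by linarith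
    rw [Real.norm_eq_abs, abs_of_nonneg (f_nonneg lam x)]
    have hrw : (x - 1) ^ (-(1/2) : ℝ) = (Real.sqrt (x - 1))⁻¹ := by
      rw [Real.rpow_neg hx1'.le, Real.sqrt_eq_rpow]
    rw [hrw, ← mul_inv, ← Real.sqrt_mul h1l.le]
    have hB : 0 < Real.sqrt ((1 - lam) * (x - 1)) := Real.sqrt_pos.2 (by positivity)
    have hle : Real.sqrt ((1 - lam) * (x - 1)) ≤ Real.sqrt (x * (x - 1) * (x - lam)) := by
      apply Real.sqrt_le_sqrt
      have h1 : (1 - lam) ≤ x * (x - lam) := by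
        nlinarith [mul_nonneg hx1'.le (show (0:ℝ) ≤ x + 1 - lam by linarith)]
      nlinarith [mul_le_mul_of_nonneg_right h1 hx1'.le]
    unfold f
    gcongr
  have part2 : IntegrableOn (f lam) (Ioi 2) := by
    have hbnd : IntegrableOn (fun x : ℝ => 2 * x ^ (-(3/2) : ℝ)) (Ioi 2) :=
      (integrableOn_Ioi_rpow_of_lt (by norm_num) (by norm_num)).const_mul 2
    refine hbnd.mono' hmeas3 ?_
    refine (ae_restrict_iff' measurableSet_Ioi).2 (Filter.Eventually.of_forall fun x hx => ?_)
    have hx2 : 2 < x := hx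
    have hx0 : (0:ℝ) < x := by linarith
    rw [Real.norm_eq_abs, abs_of_nonneg (f_nonneg lam x)]
    have hrw : x ^ (-(3/2) : ℝ) = (Real.sqrt (x ^ 3))⁻¹ := by
      rw [Real.rpow_neg hx0.le, Real.sqrt_eq_rpow, ← Real.rpow_natCast x 3,
        ← Real.rpow_mul hx0.le]
      norm_num
    rw [hrw]
    have h4 : Real.sqrt 4 = 2 := by
      rw [show (4:ℝ) = 2 ^ 2 by norm_num, Real.sqrt_sq (by norm_num : (0:ℝ) ≤ 2)]
    have hkey : x ^ 3 / 4 ≤ x * (x - 1) * (x - lam) := by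
      have hA : (0:ℝ) ≤ x * ((x/2 - 1) * (3*x/2 - 1)) :=
        mul_nonneg hx0.le (mul_nonneg (by linarith) (by linarith))
      have hB2 : x * (x - 1) * (x - 1) ≤ x * (x - 1) * (x - lam) :=
        mul_le_mul_of_nonneg_left (by linarith) (mul_pos hx0 (by linarith)).le
      nlinarith [hA, hB2]
    have key : Real.sqrt (x ^ 3 / 4) ≤ Real.sqrt (x * (x - 1) * (x - lam)) :=
      Real.sqrt_le_sqrt hkey
    have hpos : 0 < Real.sqrt (x ^ 3 / 4) := Real.sqrt_pos.2 (by positivity)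
    have hstep : f lam x ≤ (Real.sqrt (x ^ 3 / 4))⁻¹ := by
      unfold f; gcongr
    have heq : (Real.sqrt (x ^ 3 / 4))⁻¹ = 2 * (Real.sqrt (x ^ 3))⁻¹ := by
      rw [Real.sqrt_div (by positivity : (0:ℝ) ≤ x ^ 3), h4, inv_div, div_eq_mul_inv]
    linarith [hstep, heq.le]
  have : Ioc (1:ℝ) 2 ∪ Ioi 2 = Ioi 1 := Ioc_union_Ioi_eq_Ioi (by norm_num)
  rw [← this]
  exact part1.union part2

/-- Core comparison helper: from `q * a < p * b` deduce `(√b)⁻¹ < √p/√q * (√a)⁻¹`. -/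
lemma helper_lt {a b p q : ℝ} (ha : 0 < a) (hb : 0 < b) (hp : 0 < p) (hq : 0 < q)
    (h : q * a < p * b) :
    (Real.sqrt b)⁻¹ < Real.sqrt p / Real.sqrt q * (Real.sqrt a)⁻¹ := by
  have h1 : Real.sqrt (q * a) < Real.sqrt (p * b) := Real.sqrt_lt_sqrt (by positivity) h
  rw [Real.sqrt_mul hq.le, Real.sqrt_mul hp.le] at h1
  have hqa : 0 < Real.sqrt q * Real.sqrt a := by positivity
  have hsb : 0 < Real.sqrt b := Real.sqrt_pos.2 hb
  rw [inv_eq_one_div, inv_eq_one_div, div_mul_div_comm, mul_one,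
    div_lt_div_iff₀ hsb hqa, one_mul]
  exact h1

lemma helper_le {a b p q : ℝ} (ha : 0 < a) (hb : 0 < b) (hp : 0 < p) (hq : 0 < q)
    (h : p * b ≤ q * a) :
    Real.sqrt p / Real.sqrt q * (Real.sqrt a)⁻¹ ≤ (Real.sqrt b)⁻¹ := by
  have h1 : Real.sqrt (p * b) ≤ Real.sqrt (q * a) := Real.sqrt_le_sqrt h
  rw [Real.sqrt_mul hq.le, Real.sqrt_mul hp.le] at h1
  have hqa : 0 < Real.sqrt q * Real.sqrt a := by positivity
  have hsb : 0 < Real.sqrt b := Real.sqrt_pos.2 hb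
  rw [inv_eq_one_div, inv_eq_one_div, div_mul_div_comm, mul_one,
    div_le_div_iff₀ hqa hsb, one_mul]
  exact h1

lemma cube_pos {lam x : ℝ} (hl : lam < 1) (hx : 1 < x) : 0 < x * (x - 1) * (x - lam) :=
  mul_pos (mul_pos (by linarith) (by linarith)) (by linarith)

/-- Strict pointwise comparison on `(u, ∞)`. -/
lemma ptwise_lt {u l1 l2 x : ℝ} (hu : 1 < u) (hl1 : 0 < l1) (h12 : l1 < l2) (hl2 : l2 < 1)
    (hx : u < x) :
    f l2 x < Real.sqrt (u - l1) / Real.sqrt (u - l2) * f l1 x := by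
  have hx1 : 1 < x := lt_trans hu hx
  have h := helper_lt (cube_pos (by linarith : l1 < 1) hx1) (cube_pos hl2 hx1)
    (show (0:ℝ) < u - l1 by linarith) (show (0:ℝ) < u - l2 by linarith)
    (show (u - l2) * (x * (x - 1) * (x - l1)) < (u - l1) * (x * (x - 1) * (x - l2)) by
      nlinarith [mul_pos (mul_pos (show (0:ℝ) < x by linarith)
        (show (0:ℝ) < x - 1 by linarith)) (show (0:ℝ) < (x - u) * (l2 - l1) by
          exact mul_pos (by linarith) (by linarith))])
  exact h

/-- Pointwise comparison on `(1, u]`. -/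
lemma ptwise_le {u l1 l2 x : ℝ} (hu : 1 < u) (hl1 : 0 < l1) (h12 : l1 < l2) (hl2 : l2 < 1)
    (hx1 : 1 < x) (hxu : x ≤ u) :
    Real.sqrt (u - l1) / Real.sqrt (u - l2) * f l1 x ≤ f l2 x := by
  have h := helper_le (cube_pos (by linarith : l1 < 1) hx1) (cube_pos hl2 hx1)
    (show (0:ℝ) < u - l1 by linarith) (show (0:ℝ) < u - l2 by linarith)
    (show (u - l1) * (x * (x - 1) * (x - l2)) ≤ (u - l2) * (x * (x - 1) * (x - l1)) by
      nlinarith [mul_nonneg (mul_nonneg (show (0:ℝ) ≤ x by linarith)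
        (show (0:ℝ) ≤ x - 1 by linarith)) (show (0:ℝ) ≤ (u - x) * (l2 - l1) by
          exact mul_nonneg (by linarith) (by linarith))])
  exact h

end EllipticRatioAux

/-- For `u > 1`, the ratio `I_u(λ)/I₁(λ)` of the elliptic integrals
`I_v(λ) = ∫_v^∞ dx/√(x(x−1)(x−λ))` is strictly decreasing for `λ ∈ (0, 1)`. -/
theorem elliptic_integral_ratio_strictAnti (u : ℝ) (hu : 1 < u) :
    StrictAntiOn (fun lam : ℝ =>
      (∫ x in Set.Ioi u, (Real.sqrt (x * (x - 1) * (x - lam)))⁻¹) /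
      (∫ x in Set.Ioi (1 : ℝ), (Real.sqrt (x * (x - 1) * (x - lam)))⁻¹))
      (Set.Ioo 0 1) := by
  intro l1 hl1m l2 hl2m h12
  obtain ⟨hl1, hl1u⟩ := hl1m
  obtain ⟨hl2, hl2u⟩ := hl2m
  set c := Real.sqrt (u - l1) / Real.sqrt (u - l2) with hc
  have hc0 : 0 < c := by
    apply div_pos <;> [skip; skip] <;> exact Real.sqrt_pos.2 (by linarith)
  -- integrabilities
  have hI1 : IntegrableOn (EllipticRatioAux.f l1) (Set.Ioi 1) :=
    EllipticRatioAux.integrableOn_f hl1u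
  have hI2 : IntegrableOn (EllipticRatioAux.f l2) (Set.Ioi 1) :=
    EllipticRatioAux.integrableOn_f hl2u
  have hsub1 : Set.Ioi u ⊆ Set.Ioi 1 := Set.Ioi_subset_Ioi hu.le
  have hsub2 : Set.Ioc 1 u ⊆ Set.Ioi 1 := Set.Ioc_subset_Ioi_self
  have hF1i : IntegrableOn (EllipticRatioAux.f l1) (Set.Ioi u) := hI1.mono_set hsub1
  have hF2i : IntegrableOn (EllipticRatioAux.f l2) (Set.Ioi u) := hI2.mono_set hsub1
  have hJ1i : IntegrableOn (EllipticRatioAux.f l1) (Set.Ioc 1 u) := hI1.mono_set hsub2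
  have hJ2i : IntegrableOn (EllipticRatioAux.f l2) (Set.Ioc 1 u) := hI2.mono_set hsub2
  set F1 := ∫ x in Set.Ioi u, EllipticRatioAux.f l1 x with hF1
  set F2 := ∫ x in Set.Ioi u, EllipticRatioAux.f l2 x with hF2
  set J1 := ∫ x in Set.Ioc 1 u, EllipticRatioAux.f l1 x with hJ1
  set J2 := ∫ x in Set.Ioc 1 u, EllipticRatioAux.f l2 x with hJ2
  -- decomposition of the full integrals
  have hunion : Set.Ioc (1:ℝ) u ∪ Set.Ioi u = Set.Ioi 1 := Set.Ioc_union_Ioi_eq_Ioi hu.le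
  have hG1 : (∫ x in Set.Ioi (1:ℝ), EllipticRatioAux.f l1 x) = J1 + F1 := by
    rw [← hunion, setIntegral_union (Set.Ioc_disjoint_Ioi le_rfl) measurableSet_Ioi hJ1i hF1i]
  have hG2 : (∫ x in Set.Ioi (1:ℝ), EllipticRatioAux.f l2 x) = J2 + F2 := by
    rw [← hunion, setIntegral_union (Set.Ioc_disjoint_Ioi le_rfl) measurableSet_Ioi hJ2i hF2i]
  -- positivity of pieces
  have hposJ1 : 0 < J1 := by
    rw [hJ1, setIntegral_pos_iff_support_of_nonneg_ae
      (Filter.Eventually.of_forall fun x => EllipticRatioAux.f_nonneg l1 x) hJ1i]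
    have hss : Set.Ioc (1:ℝ) u ⊆ Function.support (EllipticRatioAux.f l1) ∩ Set.Ioc 1 u :=
      fun x hx => ⟨(EllipticRatioAux.f_pos hl1u hx.1).ne', hx⟩
    calc (0:ENNReal) < volume (Set.Ioc (1:ℝ) u) := by
          rw [Real.volume_Ioc]; simp [ENNReal.ofReal_pos]; linarith
      _ ≤ _ := measure_mono hss
  have hposF1 : 0 < F1 := by
    rw [hF1, setIntegral_pos_iff_support_of_nonneg_ae
      (Filter.Eventually.of_forall fun x => EllipticRatioAux.f_nonneg l1 x) hF1i]
    have hss : Set.Ioi u ⊆ Function.support (EllipticRatioAux.f l1) ∩ Set.Ioi u :=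
      fun x hx => ⟨(EllipticRatioAux.f_pos hl1u (lt_trans hu hx)).ne', hx⟩
    calc (0:ENNReal) < volume (Set.Ioi u) := by rw [Real.volume_Ioi]; simp
      _ ≤ _ := measure_mono hss
  have hF2nn : 0 ≤ F2 :=
    setIntegral_nonneg measurableSet_Ioi fun x _ => EllipticRatioAux.f_nonneg l2 x
  -- strict comparison on the tail
  have hF2lt : F2 < c * F1 := by
    have hintc : IntegrableOn (fun x => c * EllipticRatioAux.f l1 x) (Set.Ioi u) :=
      hF1i.const_mul c
    have hdiff : 0 < ∫ x in Set.Ioi u, (c * EllipticRatioAux.f l1 x - EllipticRatioAux.f l2 x) := by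
      rw [setIntegral_pos_iff_support_of_nonneg_ae ?nn ?int]
      case int => exact hintc.sub hF2i
      case nn =>
        refine (ae_restrict_iff' measurableSet_Ioi).2 (Filter.Eventually.of_forall fun x hx => ?_)
        have := EllipticRatioAux.ptwise_lt hu hl1 h12 hl2u hx
        simp only [Pi.zero_apply]
        linarith
      have hss : Set.Ioi u ⊆
          Function.support (fun x => c * EllipticRatioAux.f l1 x - EllipticRatioAux.f l2 x)
            ∩ Set.Ioi u := by
        intro x hx
        have := EllipticRatioAux.ptwise_lt hu hl1 h12 hl2u hx
        exact ⟨by simp only [Function.mem_support]; intro h; linarith, hx⟩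
      calc (0:ENNReal) < volume (Set.Ioi u) := by rw [Real.volume_Ioi]; simp
        _ ≤ _ := measure_mono hss
    rw [integral_sub hintc hF2i, MeasureTheory.integral_const_mul] at hdiff
    linarith
  -- comparison on the middle piece
  have hJ2ge : c * J1 ≤ J2 := by
    have : (∫ x in Set.Ioc 1 u, c * EllipticRatioAux.f l1 x) ≤
        ∫ x in Set.Ioc 1 u, EllipticRatioAux.f l2 x := by
      refine setIntegral_mono_on (hJ1i.const_mul c) hJ2i measurableSet_Ioc fun x hx => ?_
      exact EllipticRatioAux.ptwise_le hu hl1 h12 hl2u hx.1 hx.2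
    rwa [MeasureTheory.integral_const_mul] at this
  have hposJ2 : 0 < J2 := lt_of_lt_of_le (by positivity) hJ2ge
  have hposG1 : 0 < J1 + F1 := by linarith
  have hposG2 : 0 < J2 + F2 := by linarith
  -- conclude
  show F2 / (∫ x in Set.Ioi (1:ℝ), EllipticRatioAux.f l2 x) <
    F1 / (∫ x in Set.Ioi (1:ℝ), EllipticRatioAux.f l1 x)
  rw [hG1, hG2, div_lt_div_iff₀ hposG2 hposG1]
  have key : F2 * J1 < F1 * J2 := by
    calc F2 * J1 < (c * F1) * J1 := by exact mul_lt_mul_of_pos_right hF2lt hposJ1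
      _ = (c * J1) * F1 := by ring
      _ ≤ J2 * F1 := mul_le_mul_of_nonneg_right hJ2ge hposF1.le
      _ = F1 * J2 := by ring
  nlinarith [key]
end

section
/- For every real number u > 1, the function λ ↦ (∫_u^∞ dx/√(x(x−1)(x−λ))) / (∫_0^1 dx/√(x(1−x)(λ−x))) is strictly increasing on the interval (1, u). -/
open MeasureTheory

open Set in

lemma sqrt32 (x : ℝ) (hx : 0 < x) : x ^ (-(3/2) : ℝ) = (x * Real.sqrt x)⁻¹ := by
  rw [Real.rpow_neg hx.le]
  congr 1
  rw [show (3/2 : ℝ) = 1 + 1/2 by norm_num, Real.rpow_add hx, Real.rpow_one,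
    ← Real.sqrt_eq_rpow]

lemma integrableOn_I (u lam : ℝ) (hu : 1 < u) (h1 : 1 < lam) (h2 : lam < u) :
    IntegrableOn (fun x => (Real.sqrt (x * (x - 1) * (x - lam)))⁻¹) (Set.Ioi u) := by
  have hu0 : (0:ℝ) < u := lt_trans one_pos hu
  obtain ⟨t, ht0, ht1, hts⟩ : ∃ t : ℝ, 0 < t ∧ t < 1 ∧ (1 - t) * u = lam := by
    refine ⟨1 - lam / u, ?_, ?_, ?_⟩
    · have : lam / u < 1 := (div_lt_one hu0).2 h2
      linarith
    · have : 0 < lam / u := div_pos (by linarith) hu0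
      linarith
    · field_simp
      ring
  have hmaj : IntegrableOn (fun x => (t * Real.sqrt t)⁻¹ * x ^ (-(3/2) : ℝ)) (Set.Ioi u) :=
    (integrableOn_Ioi_rpow_of_lt (by norm_num) hu0).const_mul _
  refine hmaj.mono' ?_ ?_
  · have hc : Continuous fun x : ℝ => Real.sqrt (x * (x - 1) * (x - lam)) :=
      Real.continuous_sqrt.comp (by continuity)
    exact hc.measurable.inv.aestronglyMeasurable
  · filter_upwards [ae_restrict_mem measurableSet_Ioi] with x hx
    have hxu : u < x := hx
    have hx0 : 0 < x := hu0.trans hxu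
    have hx1 : 1 < x := hu.trans hxu
    have htx0 : 0 < t * x := mul_pos ht0 hx0
    have hcross : 0 ≤ (1 - t) * (x - u) :=
      mul_nonneg (by linarith) (by linarith)
    have e1 : t * x ≤ x - 1 := by nlinarith
    have e2 : t * x ≤ x - lam := by nlinarith
    have e3 : t * x ≤ x := by nlinarith
    have hp : ((t*x) * (t*x)) * (t*x) ≤ (x * (x - 1)) * (x - lam) :=
      mul_le_mul (mul_le_mul e3 e1 htx0.le hx0.le) e2 htx0.le
        (by nlinarith)
    have hs : (t*x) * Real.sqrt (t*x) ≤ Real.sqrt (x * (x - 1) * (x - lam)) := by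
      rw [show (t*x) * Real.sqrt (t*x) = Real.sqrt (((t*x) * (t*x)) * (t*x)) by
        rw [show ((t*x) * (t*x)) * (t*x) = (t*x)^2 * (t*x) by ring,
          Real.sqrt_mul (sq_nonneg _), Real.sqrt_sq htx0.le]]
      exact Real.sqrt_le_sqrt hp
    have hpos : 0 < (t*x) * Real.sqrt (t*x) := mul_pos htx0 (Real.sqrt_pos.2 htx0)
    rw [Real.norm_eq_abs, abs_of_nonneg (inv_nonneg.2 (Real.sqrt_nonneg _))]
    calc (Real.sqrt (x * (x - 1) * (x - lam)))⁻¹ ≤ ((t*x) * Real.sqrt (t*x))⁻¹ := by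
          gcongr
      _ = (t * Real.sqrt t)⁻¹ * x ^ (-(3/2) : ℝ) := by
          rw [sqrt32 x hx0, Real.sqrt_mul ht0.le, ← mul_inv]
          ring_nf

lemma integrableOn_sqrt_inv : IntegrableOn (fun x : ℝ => (Real.sqrt x)⁻¹) (Set.Ioo 0 1) := by
  have h : IntegrableOn (fun x : ℝ => x ^ (-(1/2) : ℝ)) (Set.Ioo 0 1) :=
    (intervalIntegral.integrableOn_Ioo_rpow_iff one_pos).2 (by norm_num)
  refine h.congr_fun (fun x hx => ?_) measurableSet_Ioo
  dsimp only
  rw [Real.rpow_neg hx.1.le, ← Real.sqrt_eq_rpow]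

lemma integrableOn_sqrt_inv' : IntegrableOn (fun x : ℝ => (Real.sqrt (1 - x))⁻¹) (Set.Ioo 0 1) := by
  have h : IntervalIntegrable (fun x : ℝ => (Real.sqrt x)⁻¹) volume 0 1 :=
    (intervalIntegrable_iff_integrableOn_Ioo_of_le zero_le_one).2 integrableOn_sqrt_inv
  have h2 := (h.comp_sub_left 1).symm
  simp only [sub_zero, sub_self] at h2
  exact (intervalIntegrable_iff_integrableOn_Ioo_of_le zero_le_one).1 h2

lemma integrableOn_J (lam : ℝ) (h1 : 1 < lam) :
    IntegrableOn (fun x => (Real.sqrt (x * (1 - x) * (lam - x)))⁻¹) (Set.Ioo (0:ℝ) 1) := by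
  set c : ℝ := (Real.sqrt ((lam - 1) / 2))⁻¹ with hc
  have hc0 : 0 ≤ c := inv_nonneg.2 (Real.sqrt_nonneg _)
  have hmaj : IntegrableOn
      (fun x : ℝ => c * ((Real.sqrt x)⁻¹ + (Real.sqrt (1 - x))⁻¹)) (Set.Ioo (0:ℝ) 1) :=
    (integrableOn_sqrt_inv.add integrableOn_sqrt_inv').const_mul c
  refine hmaj.mono' ?_ ?_
  · have hcont : Continuous fun x : ℝ => Real.sqrt (x * (1 - x) * (lam - x)) :=
      Real.continuous_sqrt.comp (by continuity)
    exact hcont.measurable.inv.aestronglyMeasurable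
  · filter_upwards [ae_restrict_mem measurableSet_Ioo] with x hx
    obtain ⟨hx0, hx1⟩ := hx
    have key : ∀ y q : ℝ, 0 < y → ((lam - 1) / 2) * y ≤ q →
        (Real.sqrt q)⁻¹ ≤ c * (Real.sqrt y)⁻¹ := by
      intro y q hy hq
      have hA : 0 < Real.sqrt ((lam - 1) / 2) * Real.sqrt y :=
        mul_pos (Real.sqrt_pos.2 (by linarith)) (Real.sqrt_pos.2 hy)
      have hs : Real.sqrt ((lam - 1) / 2) * Real.sqrt y ≤ Real.sqrt q := by
        rw [← Real.sqrt_mul (by linarith) y]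
        exact Real.sqrt_le_sqrt hq
      calc (Real.sqrt q)⁻¹ ≤ (Real.sqrt ((lam - 1) / 2) * Real.sqrt y)⁻¹ := by gcongr
        _ = c * (Real.sqrt y)⁻¹ := by rw [mul_inv, hc]
    have hnn : 0 ≤ (Real.sqrt (x * (1 - x) * (lam - x)))⁻¹ :=
      inv_nonneg.2 (Real.sqrt_nonneg _)
    rw [Real.norm_eq_abs, abs_of_nonneg hnn]
    rcases le_or_gt x (1/2) with hhalf | hhalf
    · have ha : (1/2 : ℝ) * (lam - 1) ≤ (1 - x) * (lam - x) :=
        mul_le_mul (by linarith) (by linarith) (by linarith) (by linarith)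
      have hq : ((lam - 1) / 2) * x ≤ x * (1 - x) * (lam - x) := by
        nlinarith [mul_le_mul_of_nonneg_left ha hx0.le]
      have := key x _ hx0 hq
      have h2 : 0 ≤ c * (Real.sqrt (1 - x))⁻¹ :=
        mul_nonneg hc0 (inv_nonneg.2 (Real.sqrt_nonneg _))
      calc (Real.sqrt (x * (1 - x) * (lam - x)))⁻¹ ≤ c * (Real.sqrt x)⁻¹ := this
        _ ≤ c * ((Real.sqrt x)⁻¹ + (Real.sqrt (1 - x))⁻¹) := by
            rw [mul_add]; linarith
    · have ha : (1/2 : ℝ) * (lam - 1) ≤ x * (lam - x) :=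
        mul_le_mul (by linarith) (by linarith) (by linarith) (by linarith)
      have hq : ((lam - 1) / 2) * (1 - x) ≤ x * (1 - x) * (lam - x) := by
        nlinarith [mul_le_mul_of_nonneg_left ha (by linarith : (0:ℝ) ≤ 1 - x)]
      have := key (1 - x) _ (by linarith) hq
      have h2 : 0 ≤ c * (Real.sqrt x)⁻¹ :=
        mul_nonneg hc0 (inv_nonneg.2 (Real.sqrt_nonneg _))
      calc (Real.sqrt (x * (1 - x) * (lam - x)))⁻¹ ≤ c * (Real.sqrt (1 - x))⁻¹ := this
        _ ≤ c * ((Real.sqrt x)⁻¹ + (Real.sqrt (1 - x))⁻¹) := by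
            rw [mul_add]; linarith

lemma setIntegral_lt_setIntegral_of_lt {s : Set ℝ} (hs : MeasurableSet s)
    (hμ : 0 < volume s) {f g : ℝ → ℝ} (hf : IntegrableOn f s) (hg : IntegrableOn g s)
    (h : ∀ x ∈ s, f x < g x) : (∫ x in s, f x) < ∫ x in s, g x := by
  have h0 : 0 < ∫ x in s, (g x - f x) := by
    have := setIntegral_pos_iff_support_of_nonneg_ae (s := s) (f := fun x => g x - f x) ?_
      (hg.sub hf)
    rw [this]
    · refine lt_of_lt_of_le hμ (measure_mono fun x hx => ?_)
      exact ⟨Function.mem_support.2 (sub_pos.2 (h x hx)).ne', hx⟩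
    · filter_upwards [ae_restrict_mem hs] with x hx
      exact sub_nonneg.2 (h x hx).le
  have hsub := integral_sub hg hf
  rw [hsub] at h0
  linarith

lemma J_pos (lam : ℝ) (h1 : 1 < lam)
    (hint : IntegrableOn (fun x => (Real.sqrt (x * (1 - x) * (lam - x)))⁻¹) (Set.Ioo (0:ℝ) 1)) :
    0 < ∫ x in Set.Ioo (0:ℝ) 1, (Real.sqrt (x * (1 - x) * (lam - x)))⁻¹ := by
  rw [setIntegral_pos_iff_support_of_nonneg_ae
      (ae_of_all _ fun x => inv_nonneg.2 (Real.sqrt_nonneg _)) hint]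
  have hsub : Set.Ioo (0:ℝ) 1 ⊆
      (Function.support fun x => (Real.sqrt (x * (1 - x) * (lam - x)))⁻¹) ∩ Set.Ioo (0:ℝ) 1 := by
    intro x hx
    refine ⟨Function.mem_support.2 ?_, hx⟩
    have hp : 0 < x * (1 - x) * (lam - x) :=
      mul_pos (mul_pos hx.1 (by linarith [hx.2])) (by linarith [hx.2])
    exact (inv_pos.2 (Real.sqrt_pos.2 hp)).ne'
  refine lt_of_lt_of_le ?_ (measure_mono hsub)
  rw [Real.volume_Ioo]
  norm_num


/-- For `u > 1`, the ratio `I_u(λ)/J(λ)`, where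
`I_u(λ) = ∫_u^∞ dx/√(x(x−1)(x−λ))` and `J(λ) = ∫_0^1 dx/√(x(1−x)(λ−x))`, is strictly
increasing for `λ ∈ (1, u)`. -/
theorem elliptic_integral_ratio_strictMono (u : ℝ) (hu : 1 < u) :
    StrictMonoOn (fun lam : ℝ =>
      (∫ x in Set.Ioi u, (Real.sqrt (x * (x - 1) * (x - lam)))⁻¹) /
      (∫ x in Set.Ioo (0 : ℝ) 1, (Real.sqrt (x * (1 - x) * (lam - x)))⁻¹))
      (Set.Ioo 1 u) := by
  intro a ha b hb hab
  obtain ⟨ha1, hau⟩ := ha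
  obtain ⟨hb1, hbu⟩ := hb
  have hIa := integrableOn_I u a hu ha1 hau
  have hIb := integrableOn_I u b hu hb1 hbu
  have hJa := integrableOn_J a ha1
  have hJb := integrableOn_J b hb1
  have hJa_pos := J_pos a ha1 hJa
  have hJb_pos := J_pos b hb1 hJb
  have hI : (∫ x in Set.Ioi u, (Real.sqrt (x * (x - 1) * (x - a)))⁻¹) <
      ∫ x in Set.Ioi u, (Real.sqrt (x * (x - 1) * (x - b)))⁻¹ := by
    refine setIntegral_lt_setIntegral_of_lt measurableSet_Ioi ?_ hIa hIb ?_
    · rw [Real.volume_Ioi]; exact ENNReal.zero_lt_top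
    · intro x hx
      have hxu : u < x := hx
      have h1x : 1 < x := hu.trans hxu
      have hpb : 0 < x * (x - 1) * (x - b) :=
        mul_pos (mul_pos (by linarith) (by linarith)) (by linarith)
      have hlt : x * (x - 1) * (x - b) < x * (x - 1) * (x - a) := by nlinarith
      have hsq := Real.sqrt_lt_sqrt hpb.le hlt
      exact inv_strictAnti₀ (Real.sqrt_pos.2 hpb) hsq
  have hJ : (∫ x in Set.Ioo (0:ℝ) 1, (Real.sqrt (x * (1 - x) * (b - x)))⁻¹) ≤
      ∫ x in Set.Ioo (0:ℝ) 1, (Real.sqrt (x * (1 - x) * (a - x)))⁻¹ := by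
    refine le_of_lt (setIntegral_lt_setIntegral_of_lt measurableSet_Ioo ?_ hJb hJa ?_)
    · rw [Real.volume_Ioo]; norm_num
    · intro x hx
      have hpa : 0 < x * (1 - x) * (a - x) :=
        mul_pos (mul_pos hx.1 (by linarith [hx.2])) (by linarith [hx.2])
      have hlt : x * (1 - x) * (a - x) < x * (1 - x) * (b - x) := by
        nlinarith [hx.1, hx.2, mul_pos hx.1 (show (0:ℝ) < 1 - x by linarith [hx.2])]
      have hsq := Real.sqrt_lt_sqrt hpa.le hlt
      exact inv_strictAnti₀ (Real.sqrt_pos.2 hpa) hsq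
  have hIb_nonneg : 0 ≤ ∫ x in Set.Ioi u, (Real.sqrt (x * (x - 1) * (x - b)))⁻¹ :=
    setIntegral_nonneg measurableSet_Ioi fun x _ => inv_nonneg.2 (Real.sqrt_nonneg _)
  simp only
  calc (∫ x in Set.Ioi u, (Real.sqrt (x * (x - 1) * (x - a)))⁻¹) /
        (∫ x in Set.Ioo (0:ℝ) 1, (Real.sqrt (x * (1 - x) * (a - x)))⁻¹)
      < (∫ x in Set.Ioi u, (Real.sqrt (x * (x - 1) * (x - b)))⁻¹) /
        (∫ x in Set.Ioo (0:ℝ) 1, (Real.sqrt (x * (1 - x) * (a - x)))⁻¹) := by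
        exact div_lt_div_of_pos_right hI hJa_pos
    _ ≤ (∫ x in Set.Ioi u, (Real.sqrt (x * (x - 1) * (x - b)))⁻¹) /
        (∫ x in Set.Ioo (0:ℝ) 1, (Real.sqrt (x * (1 - x) * (b - x)))⁻¹) := by
        exact div_le_div_of_nonneg_left hIb_nonneg hJb_pos hJ
end

section
/- Let d ≥ 1, R > 0 and c ≥ 1, and let U ⊂ ℝ^d be the open ball of radius R centered at 0. Let f : U → ℝ^d be a continuous map which is differentiable at every point x with ‖x‖ ≤ R/2, such that: (i) for every x with ‖x‖ ≤ R/2, the derivative Df(x) is an invertible linear map with operator norm ‖Df(x)⁻¹‖ ≤ c; and (ii) for all x, y ∈ ℝ^d with ‖x‖ ≤ R/2 and ‖x + y‖ ≤ R/2, one has ‖f(x+y) − f(x) − Df(x)·y‖ ≤ ‖y‖/(2c²). Then the open ball of radius R/(4c) centered at f(0) is contained in f(U); in fact, for every v ∈ ℝ^d with ‖v − f(0)‖ < R/(4c) there exists x with ‖x‖ ≤ R/2 and f(x) = v. -/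
open Filter Topology

noncomputable section

set_option maxHeartbeats 1000000 in
/-- A quantitative inverse-function/open-mapping statement: if `f` is continuous on the
ball `U` of radius `R`, differentiable on the closed ball of radius `R/2` with
derivatives `Df(x) = f' x` invertible, `‖Df(x)⁻¹‖ ≤ c`, and with a uniform first-order
approximation error at most `‖y‖/(2c²)`, then `f(U)` contains the ball of radius
`R/(4c)` centered at `f 0`; in fact every such value is attained on the closed ball of
radius `R/2`. -/
theorem quantitative_surjectivity (d : ℕ) (hd : 1 ≤ d) (R c : ℝ) (hR : 0 < R)
    (hc : 1 ≤ c)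
    (f : EuclideanSpace ℝ (Fin d) → EuclideanSpace ℝ (Fin d))
    (f' : EuclideanSpace ℝ (Fin d) → (EuclideanSpace ℝ (Fin d) ≃L[ℝ] EuclideanSpace ℝ (Fin d)))
    (hcont : ContinuousOn f (Metric.ball 0 R))
    (hderiv : ∀ x : EuclideanSpace ℝ (Fin d), ‖x‖ ≤ R / 2 →
      HasFDerivAt f ((f' x : EuclideanSpace ℝ (Fin d) →L[ℝ] EuclideanSpace ℝ (Fin d))) x)
    (hinv : ∀ x : EuclideanSpace ℝ (Fin d), ‖x‖ ≤ R / 2 →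
      ‖((f' x).symm : EuclideanSpace ℝ (Fin d) →L[ℝ] EuclideanSpace ℝ (Fin d))‖ ≤ c)
    (happrox : ∀ x y : EuclideanSpace ℝ (Fin d), ‖x‖ ≤ R / 2 → ‖x + y‖ ≤ R / 2 →
      ‖f (x + y) - f x - f' x y‖ ≤ ‖y‖ / (2 * c ^ 2)) :
    Metric.ball (f 0) (R / (4 * c)) ⊆ f '' Metric.ball 0 R ∧
    ∀ v : EuclideanSpace ℝ (Fin d), ‖v - f 0‖ < R / (4 * c) →
      ∃ x : EuclideanSpace ℝ (Fin d), ‖x‖ ≤ R / 2 ∧ f x = v := by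
  have hc0 : (0:ℝ) < c := lt_of_lt_of_le one_pos hc
  set q : ℝ := 1 / (2 * c) with hq_def
  have hq0 : 0 < q := by positivity
  have hq2 : q ≤ 1/2 := by
    rw [hq_def]; rw [div_le_div_iff₀ (by positivity) (by norm_num)]; nlinarith
  have hq1 : q < 1 := lt_of_le_of_lt hq2 (by norm_num)
  have main : ∀ v : EuclideanSpace ℝ (Fin d), ‖v - f 0‖ < R / (4 * c) →
      ∃ x : EuclideanSpace ℝ (Fin d), ‖x‖ ≤ R / 2 ∧ f x = v := by
    intro v hv
    have hv0 : 0 ≤ ‖v - f 0‖ := norm_nonneg _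
    have hB : 2 * c * ‖v - f 0‖ < R / 2 := by
      have : 2 * c * ‖v - f 0‖ < 2 * c * (R / (4 * c)) := by
        apply mul_lt_mul_of_pos_left hv (by positivity)
      calc 2 * c * ‖v - f 0‖ < 2 * c * (R / (4 * c)) := this
        _ = R / 2 := by field_simp; ring
    -- the Newton iteration
    set x : ℕ → EuclideanSpace ℝ (Fin d) :=
      fun n => Nat.rec (0 : EuclideanSpace ℝ (Fin d))
        (fun _ a => a + (f' a).symm (v - f a)) n with hx_def
    have hx0 : x 0 = 0 := rfl
    have hxs : ∀ n, x (n + 1) = x n + (f' (x n)).symm (v - f (x n)) := fun n => rfl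
    clear_value x
    -- symm norm bound
    have hsymm : ∀ a : EuclideanSpace ℝ (Fin d), ‖a‖ ≤ R / 2 →
        ∀ w, ‖(f' a).symm w‖ ≤ c * ‖w‖ := by
      intro a ha w
      calc ‖(f' a).symm w‖
          = ‖((f' a).symm : EuclideanSpace ℝ (Fin d) →L[ℝ] EuclideanSpace ℝ (Fin d)) w‖ := rfl
        _ ≤ ‖((f' a).symm : EuclideanSpace ℝ (Fin d) →L[ℝ] EuclideanSpace ℝ (Fin d))‖ * ‖w‖ :=
            ContinuousLinearMap.le_opNorm _ w
        _ ≤ c * ‖w‖ := mul_le_mul_of_nonneg_right (hinv a ha) (norm_nonneg w)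
    -- main invariant
    have key : ∀ n, ‖x n‖ ≤ 2 * c * ‖v - f 0‖ * (1 - q ^ n) ∧
        ‖v - f (x n)‖ ≤ ‖v - f 0‖ * q ^ n := by
      intro n
      induction n with
      | zero => simp [hx0]
      | succ n ih =>
        obtain ⟨hXn, hEn⟩ := ih
        have hqn : (0:ℝ) < q ^ n := pow_pos hq0 n
        have hqn1 : q ^ n ≤ 1 := pow_le_one₀ hq0.le hq1.le
        have haR : ‖x n‖ ≤ R / 2 := by nlinarith
        set y := (f' (x n)).symm (v - f (x n)) with hy_def
        have hy : ‖y‖ ≤ c * ‖v - f (x n)‖ := hsymm _ haR _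
        have hXn1 : ‖x (n+1)‖ ≤ 2 * c * ‖v - f 0‖ * (1 - q ^ (n+1)) := by
          have h1 : ‖x (n+1)‖ ≤ ‖x n‖ + ‖y‖ := by
            rw [hxs n]; exact norm_add_le _ _
          have h2 : c * ‖v - f (x n)‖ ≤ c * (‖v - f 0‖ * q ^ n) :=
            mul_le_mul_of_nonneg_left hEn hc0.le
          have hq' : q ^ (n+1) = q * q ^ n := by ring
          have hcq : c * q = 1/2 := by rw [hq_def]; field_simp
          have hnn : (0:ℝ) ≤ (1 - 2*q) * (c * (‖v - f 0‖ * q ^ n)) :=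
            mul_nonneg (by linarith) (by positivity)
          nlinarith [hy.trans h2]
        refine ⟨hXn1, ?_⟩
        have haR1 : ‖x n + y‖ ≤ R / 2 := by
          rw [← hxs n]
          have h1 : (0:ℝ) < q ^ (n+1) := pow_pos hq0 (n+1)
          have h2 : q ^ (n+1) ≤ 1 := pow_le_one₀ hq0.le hq1.le
          nlinarith
        have happ := happrox (x n) y haR haR1
        have hfy : (f' (x n)) y = v - f (x n) := (f' (x n)).apply_symm_apply _
        have heq : f (x n + y) - f (x n) - f' (x n) y = f (x (n+1)) - v := by
          rw [hfy, hxs n]; abel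
        rw [heq] at happ
        have : ‖v - f (x (n+1))‖ = ‖f (x (n+1)) - v‖ := norm_sub_rev _ _
        rw [this]
        calc ‖f (x (n+1)) - v‖ ≤ ‖y‖ / (2 * c ^ 2) := happ
          _ ≤ (c * (‖v - f 0‖ * q ^ n)) / (2 * c ^ 2) := by
              apply div_le_div_of_nonneg_right ?_ (by positivity)
              · exact hy.trans (mul_le_mul_of_nonneg_left hEn hc0.le)
          _ = ‖v - f 0‖ * q ^ (n+1) := by
              rw [hq_def]; field_simp; rw [pow_succ]; field_simp
    -- bounds on x n
    have hxR : ∀ n, ‖x n‖ ≤ R / 2 := by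
      intro n
      have := (key n).1
      have hqn1 : q ^ n ≤ 1 := pow_le_one₀ hq0.le hq1.le
      have hqn : (0:ℝ) < q ^ n := pow_pos hq0 n
      nlinarith
    -- Cauchy
    have hcauchy : CauchySeq x := by
      apply cauchySeq_of_le_geometric q (c * ‖v - f 0‖) hq1
      intro n
      rw [dist_eq_norm, hxs n]
      have : x n - (x n + (f' (x n)).symm (v - f (x n))) = -((f' (x n)).symm (v - f (x n))) := by
        abel
      rw [this, norm_neg]
      calc ‖(f' (x n)).symm (v - f (x n))‖ ≤ c * ‖v - f (x n)‖ := hsymm _ (hxR n) _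
        _ ≤ c * (‖v - f 0‖ * q ^ n) := mul_le_mul_of_nonneg_left (key n).2 hc0.le
        _ = c * ‖v - f 0‖ * q ^ n := by ring
    obtain ⟨a, ha⟩ := cauchySeq_tendsto_of_complete hcauchy
    have haR : ‖a‖ ≤ R / 2 := by
      have : Tendsto (fun n => ‖x n‖) atTop (nhds ‖a‖) := (continuous_norm.tendsto a).comp ha
      exact le_of_tendsto this (Filter.Eventually.of_forall hxR)
    refine ⟨a, haR, ?_⟩
    -- f (x n) → f a
    have hmem : ∀ n, x n ∈ Metric.ball (0 : EuclideanSpace ℝ (Fin d)) R := by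
      intro n
      rw [Metric.mem_ball, dist_zero_right]
      exact lt_of_le_of_lt (hxR n) (by linarith)
    have hamem : a ∈ Metric.ball (0 : EuclideanSpace ℝ (Fin d)) R := by
      rw [Metric.mem_ball, dist_zero_right]
      exact lt_of_le_of_lt haR (by linarith)
    have hcw : ContinuousWithinAt f (Metric.ball 0 R) a := hcont a hamem
    have htend : Tendsto (fun n => f (x n)) atTop (nhds (f a)) := by
      apply hcw.tendsto.comp
      rw [tendsto_nhdsWithin_iff]
      exact ⟨ha, Filter.Eventually.of_forall hmem⟩
    -- f (x n) → v
    have htend2 : Tendsto (fun n => f (x n)) atTop (nhds v) := by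
      rw [tendsto_iff_norm_sub_tendsto_zero]
      have hgeo : Tendsto (fun n : ℕ => ‖v - f 0‖ * q ^ n) atTop (nhds 0) := by
        simpa using (tendsto_pow_atTop_nhds_zero_of_lt_one hq0.le hq1).const_mul ‖v - f 0‖
      exact squeeze_zero (fun n => norm_nonneg _)
        (fun n => by rw [norm_sub_rev]; exact (key n).2) hgeo
    exact tendsto_nhds_unique htend htend2
  refine ⟨?_, main⟩
  intro v hv
  rw [Metric.mem_ball, dist_eq_norm] at hv
  obtain ⟨a, haR, hfa⟩ := main v hv
  exact ⟨a, by rw [Metric.mem_ball, dist_zero_right]; linarith, hfa⟩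
end
end
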